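/- arXiv:0704.1100 — 6 statements merged into one kernel-verified Lean document; each statement's English description precedes it below -/
import Mathlib

section
/- Let n ≥ 1 and r ≥ 0. In the group algebra ℂS_n of the symmetric group on {1,…,n}, let T X_n^r denote the sum, over all r-tuples (i_1,…,i_r) ∈ {1,…,n−1}^r such that the subgroup of S_n generated by the transpositions (i_1 n),…,(i_r n) acts transitively on {1,…,n}, of the product (i_1 n)(i_2 n)⋯(i_r n). Then T X_n^r lies in the centre Z(n) of ℂS_n, i.e., it commutes with every element of ℂS_n. -/
open scoped Classical

/-- The cycle type of a permutation including fixed points (cycles of length 1). -/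
def fullCycleType {n : ℕ} (σ : Equiv.Perm (Fin n)) : Multiset ℕ :=
  σ.cycleType + Multiset.replicate (n - σ.support.card) 1

/-- The number of ordered factorizations of `σ` into `r` star transpositions with
pivot `p` whose factors generate a subgroup acting transitively on `Fin n`. -/
noncomputable def starFact (n r : ℕ) (p : Fin n) (σ : Equiv.Perm (Fin n)) : ℕ :=
  Nat.card {τ : Fin r → Equiv.Perm (Fin n) //
    (∀ t, ∃ a : Fin n, a ≠ p ∧ τ t = Equiv.swap p a) ∧
    (List.ofFn τ).prod = σ ∧
    ∀ x y : Fin n, ∃ g ∈ Subgroup.closure (Set.range τ), g x = y}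

/-- The series `ξ(x) = 2 x⁻¹ sinh(x/2) = Σ_{k≥0} x^{2k}/(4^k (2k+1)!)`. -/
noncomputable def xiSeries : PowerSeries ℚ :=
  PowerSeries.mk fun k => if Even k then ((4 : ℚ) ^ (k / 2) * (k + 1).factorial)⁻¹ else 0

/-- Logarithm of a formal power series with constant term `1`. -/
noncomputable def psLog (f : PowerSeries ℚ) : PowerSeries ℚ :=
  PowerSeries.mk fun m => ∑ k ∈ Finset.range (m + 1),
    ((-1 : ℚ) ^ (k + 1) / (k : ℚ)) * PowerSeries.coeff m ((f - 1) ^ k)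

/-- `ξ_{2j}`, the coefficient of `x^{2j}` in `log ξ(x)`. -/
noncomputable def xiCoeff (j : ℕ) : ℚ := PowerSeries.coeff (2 * j) (psLog xiSeries)

/-- `|Aut β| = ∏_j f_j!` where `f_j` is the number of parts of `β` equal to `j`. -/
def autCard (β : Multiset ℕ) : ℕ := β.toFinset.prod fun j => (β.count j).factorial

/-- The power sum `p_i(α)`. -/
def pPow (i : ℕ) (α : Multiset ℕ) : ℚ := (α.map fun a => (a : ℚ) ^ i).sum

/-- `q_i(α) := p_i(α) + p_1(α) - 2`. -/
def qPow (i : ℕ) (α : Multiset ℕ) : ℚ := pPow i α + pPow 1 α - 2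

/-- `q̂_i(α) := p_i(α) - 1`. -/
def qhatPow (i : ℕ) (α : Multiset ℕ) : ℚ := pPow i α - 1

/-- `Q_g(α) := Σ_{β ⊢ g} ξ_{2β} q_{2β}(α) / |Aut β|` (equal to `1` for `g = 0`). -/
noncomputable def Qser (g : ℕ) (α : Multiset ℕ) : ℚ :=
  ∑ β : Nat.Partition g,
    (β.parts.map fun b => xiCoeff b * qPow (2 * b) α).prod / (autCard β.parts : ℚ)

/-- `Q̂_g(α) := Σ_{β ⊢ g} ξ_{2β} q̂_{2β}(α) / |Aut β|` (equal to `1` for `g = 0`). -/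
noncomputable def Qhatser (g : ℕ) (α : Multiset ℕ) : ℚ :=
  ∑ β : Nat.Partition g,
    (β.parts.map fun b => xiCoeff b * qhatPow (2 * b) α).prod / (autCard β.parts : ℚ)

/-- The star factorization number `a_g(α)`, for `α` a partition of `n = α.sum` with
`m = α.card` parts: `a_g(α) = ((n+m-2+2g)!/n!) α_1⋯α_m Q_g(α)`. -/
noncomputable def aStar (g : ℕ) (α : Multiset ℕ) : ℚ :=
  ((α.sum + Multiset.card α - 2 + 2 * g).factorial : ℚ) / (α.sum.factorial : ℚ)
    * (α.map fun a => (a : ℚ)).prod * Qser g α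

/-- The scaled double Hurwitz number `b_g(α)`, for `α` a partition of `n = α.sum` with
`m = α.card` parts: `b_g(α) = (m-1+2g)! n^{m-2+2g} α_1⋯α_m Q̂_g(α)`. -/
noncomputable def bHur (g : ℕ) (α : Multiset ℕ) : ℚ :=
  ((Multiset.card α - 1 + 2 * g).factorial : ℚ)
    * (α.sum : ℚ) ^ ((Multiset.card α : ℤ) - 2 + 2 * g)
    * (α.map fun a => (a : ℚ)).prod * Qhatser g α

/-- The transitive power `T Xₙʳ` of the Young–Jucys–Murphy element with pivot `p`. -/
noncomputable def transitivePower (n r : ℕ) (p : Fin n) :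
    MonoidAlgebra ℂ (Equiv.Perm (Fin n)) :=
  ∑ v : Fin r → {j : Fin n // j ≠ p},
    if ∀ x y : Fin n, ∃ g ∈ Subgroup.closure
        (Set.range fun t => Equiv.swap ((v t : Fin n)) p), g x = y then
      MonoidAlgebra.of ℂ (Equiv.Perm (Fin n))
        ((List.ofFn fun t => Equiv.swap ((v t : Fin n)) p).prod)
    else 0

/-- The class sum `K_α ∈ ℂSₙ` of all permutations of full cycle type `α`. -/
noncomputable def classSum (n : ℕ) (α : Multiset ℕ) : MonoidAlgebra ℂ (Equiv.Perm (Fin n)) :=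
  ∑ σ : Equiv.Perm (Fin n),
    if fullCycleType σ = α then MonoidAlgebra.of ℂ (Equiv.Perm (Fin n)) σ else 0

section AbstractKey
variable {R : Type*} [Ring R]

private noncomputable def hsum (x y s : R) (m : ℕ) : R :=
  ∑ i ∈ Finset.range (m + 1), y ^ i * (x + s) ^ (m - i)

private lemma s_mul_pow {x y s : R} (h1 : s * x = y * s) :
    ∀ m : ℕ, s * x ^ m = y ^ m * s := by
  intro m
  induction m with
  | zero => simp
  | succ m ih =>
    rw [pow_succ, ← mul_assoc, ih, mul_assoc, h1, ← mul_assoc, ← pow_succ]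

private lemma commute_y_hsum {x y s : R} (h4 : Commute (x + s) y) (m : ℕ) :
    Commute y (hsum x y s m) := by
  refine Finset.sum_induction _ _ (fun a b => Commute.add_right) (Commute.zero_right y) ?_
  intro i _
  exact ((Commute.refl y).pow_right i).mul_right ((h4.symm).pow_right _)

private lemma hsum_succ_left (x y s : R) (m : ℕ) :
    hsum x y s (m + 1) = (x + s) ^ (m + 1) + y * hsum x y s m := by
  rw [hsum, Finset.sum_range_succ' (fun i => y ^ i * (x + s) ^ (m + 1 - i)) (m+1)]
  simp only [pow_zero, one_mul, Nat.sub_zero]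
  rw [add_comm, hsum, Finset.mul_sum]
  congr 1
  refine Finset.sum_congr rfl fun i hi => ?_
  have hi' : i ≤ m := Nat.lt_succ_iff.mp (Finset.mem_range.mp hi)
  rw [← mul_assoc, ← pow_succ']
  congr 2
  omega

private lemma hsum_succ_left' {x y s : R} (h4 : Commute (x + s) y) (m : ℕ) :
    hsum x y s (m + 1) = (x + s) * hsum x y s m + y ^ (m + 1) := by
  rw [hsum, Finset.sum_range_succ]
  simp only [Nat.sub_self, pow_zero, mul_one]
  congr 1
  rw [hsum, Finset.mul_sum]
  refine Finset.sum_congr rfl fun i hi => ?_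
  have hi' : i ≤ m := Nat.lt_succ_iff.mp (Finset.mem_range.mp hi)
  rw [← mul_assoc, (h4.pow_right i).eq, mul_assoc, ← pow_succ']
  congr 2
  omega

private lemma hsum_succ_right (x y s : R) (m : ℕ) :
    hsum x y s (m + 1) = hsum x y s m * (x + s) + y ^ (m + 1) := by
  rw [hsum, Finset.sum_range_succ]
  simp only [Nat.sub_self, pow_zero, mul_one]
  congr 1
  rw [hsum, Finset.sum_mul]
  refine Finset.sum_congr rfl fun i hi => ?_
  have hi' : i ≤ m := Nat.lt_succ_iff.mp (Finset.mem_range.mp hi)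
  rw [mul_assoc, ← pow_succ]
  congr 2
  omega

private lemma lem1 {x y s : R} (h1 : s * x = y * s) (h4 : Commute (x + s) y) :
    ∀ r : ℕ, (x + s) ^ (r + 1) - x ^ (r + 1) = hsum x y s r * s := by
  intro r
  induction r with
  | zero => simp [hsum]
  | succ r ih =>
    calc (x + s) ^ (r + 1 + 1) - x ^ (r + 1 + 1)
        = (x + s) * ((x + s) ^ (r + 1) - x ^ (r + 1)) + s * x ^ (r + 1) := by
          rw [pow_succ' (x + s) (r + 1), pow_succ' x (r + 1)]; noncomm_ring
      _ = (x + s) * (hsum x y s r * s) + y ^ (r + 1) * s := by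
          rw [ih, s_mul_pow h1]
      _ = ((x + s) * hsum x y s r + y ^ (r + 1)) * s := by noncomm_ring
      _ = hsum x y s (r + 1) * s := by rw [← hsum_succ_left' h4]

private lemma lem2 {x y s : R} (h1 : s * x = y * s) (h4 : Commute (x + s) y) :
    ∀ m : ℕ, hsum x y s m = hsum y x s m := by
  intro m
  induction m with
  | zero => simp [hsum]
  | succ m ih =>
    have hx : (x + s) ^ (m + 1) = x ^ (m + 1) + hsum x y s m * s := by
      have := lem1 h1 h4 m
      rw [sub_eq_iff_eq_add] at this
      rw [this]; noncomm_ring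
    rw [hsum_succ_left, hsum_succ_right, ← ih, hx, (commute_y_hsum h4 m).eq]
    noncomm_ring

private lemma key_identity {x y s : R} (h1 : s * x = y * s)
    (h2 : x * s = s * y) (h4 : Commute (x + s) y) (r : ℕ) :
    (x + s) ^ r - x ^ r = (y + s) ^ r - y ^ r := by
  cases r with
  | zero => simp
  | succ r =>
    have e : x * y + s * y = y * x + y * s := by
      have h := h4.eq; rw [add_mul, mul_add] at h; exact h
    have h4' : Commute (y + s) x := by
      show (y + s) * x = x * (y + s)
      calc (y + s) * x = y * x + s * x := by noncomm_ring
        _ = y * x + y * s := by rw [h1]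
        _ = x * y + s * y := e.symm
        _ = x * y + x * s := by rw [← h2]
        _ = x * (y + s) := by noncomm_ring
    rw [lem1 h1 h4 r, lem1 h2.symm h4' r, lem2 h1 h4 r]

end AbstractKey


section SwapLemmas
variable {α : Type*} [DecidableEq α]

-- (q p)(a p) = (a q)(q p)
private lemma swapI2 {a p q : α} (hap : a ≠ p) (haq : a ≠ q) (hqp : q ≠ p) :
    Equiv.swap q p * Equiv.swap a p = Equiv.swap a q * Equiv.swap q p := by
  ext x
  simp only [Equiv.Perm.mul_apply, Equiv.swap_apply_def]
  split_ifs <;> simp_all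

-- (a p)(q p) = (q p)(a q)
private lemma swapI3 {a p q : α} (hap : a ≠ p) (haq : a ≠ q) (hqp : q ≠ p) :
    Equiv.swap a p * Equiv.swap q p = Equiv.swap q p * Equiv.swap a q := by
  ext x
  simp only [Equiv.Perm.mul_apply, Equiv.swap_apply_def]
  split_ifs <;> simp_all

-- (a q)(a p) = (q p)(a q)
private lemma swapI4 {a p q : α} (hap : a ≠ p) (haq : a ≠ q) (hqp : q ≠ p) :
    Equiv.swap a q * Equiv.swap a p = Equiv.swap q p * Equiv.swap a q := by
  ext x
  simp only [Equiv.Perm.mul_apply, Equiv.swap_apply_def]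
  split_ifs <;> simp_all

-- (a q)(q p) = (a p)(a q)
private lemma swapI5 {a p q : α} (hap : a ≠ p) (haq : a ≠ q) (hqp : q ≠ p) :
    Equiv.swap a q * Equiv.swap q p = Equiv.swap a p * Equiv.swap a q := by
  ext x
  simp only [Equiv.Perm.mul_apply, Equiv.swap_apply_def]
  split_ifs <;> simp_all

-- disjoint swaps commute
private lemma swapDisj {a b p q : α} (hab : a ≠ b) (hap : a ≠ p) (haq : a ≠ q)
    (hbp : b ≠ p) (hbq : b ≠ q) (hpq : p ≠ q) :
    Equiv.swap b p * Equiv.swap a q = Equiv.swap a q * Equiv.swap b p := by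
  have hd : (Equiv.swap b p).Disjoint (Equiv.swap a q) := by
    intro x
    by_cases hxb : x = b
    · right; subst hxb; exact Equiv.swap_apply_of_ne_of_ne hab.symm hbq
    by_cases hxp : x = p
    · right; subst hxp; exact Equiv.swap_apply_of_ne_of_ne (Ne.symm hap) hpq
    · left; exact Equiv.swap_apply_of_ne_of_ne hxb hxp
  exact hd.commute.eq

end SwapLemmas

namespace TPC

variable {n : ℕ}

noncomputable def ofp (σ : Equiv.Perm (Fin n)) : MonoidAlgebra ℂ (Equiv.Perm (Fin n)) :=
  MonoidAlgebra.of ℂ (Equiv.Perm (Fin n)) σ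

lemma ofp_mul (a b : Equiv.Perm (Fin n)) : ofp (a * b) = ofp a * ofp b :=
  map_mul (MonoidAlgebra.of ℂ (Equiv.Perm (Fin n))) a b

lemma ofp_one : ofp (1 : Equiv.Perm (Fin n)) = 1 :=
  map_one (MonoidAlgebra.of ℂ (Equiv.Perm (Fin n)))

noncomputable def PV (p : Fin n) {r : ℕ} (v : Fin r → {j : Fin n // j ≠ p}) :
    Equiv.Perm (Fin n) :=
  (List.ofFn fun t => Equiv.swap ((v t : Fin n)) p).prod

noncomputable def XS (p : Fin n) (S : Finset {j : Fin n // j ≠ p}) :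
    MonoidAlgebra ℂ (Equiv.Perm (Fin n)) :=
  ∑ a ∈ S, ofp (Equiv.swap (a : Fin n) p)

lemma PV_cons (p : Fin n) {r : ℕ} (a : {j : Fin n // j ≠ p})
    (v : Fin r → {j : Fin n // j ≠ p}) :
    PV p (Fin.cons a v) = Equiv.swap (a : Fin n) p * PV p v := by
  unfold PV
  rw [List.ofFn_succ]
  simp only [Fin.cons_zero, Fin.cons_succ, List.prod_cons]

lemma B1 (p : Fin n) (S : Finset {j : Fin n // j ≠ p}) :
    ∀ r : ℕ, (XS p S) ^ r
      = ∑ v : Fin r → {j : Fin n // j ≠ p},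
          if (∀ t, v t ∈ S) then ofp (PV p v) else 0 := by
  intro r
  induction r with
  | zero =>
    rw [pow_zero]
    rw [Fintype.sum_unique]
    rw [if_pos (fun t => t.elim0)]
    unfold PV ofp
    simp [List.ofFn_zero, MonoidAlgebra.one_def]
  | succ r ih =>
    rw [pow_succ', ih]
    have rt : ∀ (w : Fin (r+1) → {j : Fin n // j ≠ p}),
        (∀ t, w t ∈ S) ↔ (w 0 ∈ S ∧ ∀ t : Fin r, w t.succ ∈ S) := by
      intro w
      constructor
      · exact fun h => ⟨h 0, fun t => h t.succ⟩
      · rintro ⟨h0, hs⟩ t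
        rcases Fin.eq_zero_or_eq_succ t with rfl | ⟨t', rfl⟩
        · exact h0
        · exact hs t'
    have reidx := Fintype.sum_equiv (Fin.consEquiv (fun _ : Fin (r+1) => ({j : Fin n // j ≠ p})))
      (fun z => if (∀ t, (Fin.consEquiv (fun _ : Fin (r+1) => ({j : Fin n // j ≠ p}))) z t ∈ S)
        then ofp (PV p ((Fin.consEquiv (fun _ : Fin (r+1) => ({j : Fin n // j ≠ p}))) z)) else 0)
      (fun w => if (∀ t, w t ∈ S) then ofp (PV p w) else 0)
      (fun z => rfl)
    rw [← reidx, Fintype.sum_prod_type, XS, Finset.sum_mul]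
    have hvan : ∀ a ∈ (Finset.univ : Finset {j : Fin n // j ≠ p}), a ∉ S →
        (∑ v : Fin r → {j : Fin n // j ≠ p},
          if (∀ t, (Fin.consEquiv (fun _ : Fin (r+1) => ({j : Fin n // j ≠ p}))) (a, v) t ∈ S)
          then ofp (PV p ((Fin.consEquiv (fun _ : Fin (r+1) => ({j : Fin n // j ≠ p}))) (a, v)))
          else 0) = 0 := by
      intro a _ ha
      refine Finset.sum_eq_zero fun v _ => ?_
      rw [if_neg]
      intro hcond
      exact ha (hcond 0)
    rw [← Finset.sum_subset (Finset.subset_univ S) hvan]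
    refine Finset.sum_congr rfl fun a ha => ?_
    rw [Finset.mul_sum]
    refine Finset.sum_congr rfl fun v _ => ?_
    by_cases hv : ∀ t : Fin r, v t ∈ S
    · rw [if_pos hv, if_pos (show ∀ t : Fin (r+1),
          (Fin.consEquiv (fun _ : Fin (r+1) => ({j : Fin n // j ≠ p}))) (a, v) t ∈ S from
          (rt (Fin.cons a v)).mpr ⟨ha, hv⟩)]
      show ofp (Equiv.swap (↑a) p) * ofp (PV p v) = ofp (PV p (Fin.cons a v))
      rw [PV_cons]
      unfold ofp
      rw [map_mul]
    · rw [if_neg hv, mul_zero, if_neg]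
      intro hcond
      exact hv fun t => hcond t.succ


private lemma incl_excl {β : Type*} [DecidableEq β] (B : Finset β) :
    ∑ t ∈ B.powerset, (-1 : ℂ) ^ (B.card - t.card) = if B = ∅ then 1 else 0 := by
  induction B using Finset.induction_on with
  | empty => simp
  | @insert a B ha ih =>
    rw [Finset.sum_powerset_insert ha]
    have h1 : ∀ t ∈ B.powerset, (-1 : ℂ) ^ ((insert a B).card - t.card)
        = -(-1 : ℂ) ^ (B.card - t.card) := by
      intro t ht
      have hts : t ⊆ B := Finset.mem_powerset.mp ht
      have htc : t.card ≤ B.card := Finset.card_le_card hts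
      rw [Finset.card_insert_of_notMem ha]
      rw [show B.card + 1 - t.card = (B.card - t.card) + 1 by omega, pow_succ]
      ring
    have h2 : ∀ t ∈ B.powerset, (-1 : ℂ) ^ ((insert a B).card - (insert a t).card)
        = (-1 : ℂ) ^ (B.card - t.card) := by
      intro t ht
      have hts : t ⊆ B := Finset.mem_powerset.mp ht
      have hat : a ∉ t := fun hc => ha (hts hc)
      rw [Finset.card_insert_of_notMem ha, Finset.card_insert_of_notMem hat]
      congr 1
      have := Finset.card_le_card hts
      omega
    rw [Finset.sum_congr rfl h1, Finset.sum_congr rfl h2]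
    rw [if_neg (Finset.insert_nonempty a B).ne_empty]
    simp

private lemma coeff_lemma {β : Type*} [DecidableEq β] [Fintype β] (A : Finset β) :
    ∑ S ∈ (Finset.univ : Finset β).powerset,
      (if A ⊆ S then (-1 : ℂ) ^ (Fintype.card β - S.card) else 0)
      = if A = Finset.univ then 1 else 0 := by
  rw [← Finset.sum_filter]
  have main : ∑ S ∈ (Finset.univ : Finset β).powerset.filter (fun S => A ⊆ S),
      (-1 : ℂ) ^ (Fintype.card β - S.card)
      = ∑ t ∈ (Finset.univ \ A).powerset, (-1 : ℂ) ^ ((Finset.univ \ A).card - t.card) := by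
    refine Finset.sum_bij' (fun S _ => S \ A) (fun t _ => A ∪ t) ?_ ?_ ?_ ?_ ?_
    · intro S hS
      rw [Finset.mem_powerset]
      exact Finset.sdiff_subset_sdiff (Finset.subset_univ S) (le_refl A)
    · intro t ht
      rw [Finset.mem_filter]
      exact ⟨Finset.mem_powerset.mpr (Finset.subset_univ _), Finset.subset_union_left⟩
    · intro S hS
      rw [Finset.mem_filter] at hS
      exact Finset.union_sdiff_of_subset hS.2
    · intro t ht
      rw [Finset.mem_powerset] at ht
      refine Finset.union_sdiff_cancel_left ?_
      exact Finset.disjoint_left.mpr fun {u} huA hut => (Finset.mem_sdiff.mp (ht hut)).2 huA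
    · intro S hS
      rw [Finset.mem_filter] at hS
      have hAS : A ⊆ S := hS.2
      have hcard : (S \ A).card = S.card - A.card := Finset.card_sdiff_of_subset hAS
      have h1 : (Finset.univ \ A).card = Fintype.card β - A.card := by
        rw [Finset.card_sdiff_of_subset (Finset.subset_univ A), Finset.card_univ]
      have hA : A.card ≤ S.card := Finset.card_le_card hAS
      have hSu : S.card ≤ Fintype.card β := by
        rw [← Finset.card_univ]; exact Finset.card_le_card (Finset.subset_univ S)
      rw [hcard, h1]
      congr 1
      omega
  rw [main, incl_excl]
  congr 1
  rw [Finset.sdiff_eq_empty_iff_subset, Finset.univ_subset_iff]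

lemma B2 (p : Fin n) (r : ℕ) :
    (∑ v : Fin r → {j : Fin n // j ≠ p},
      if (∀ j : {j : Fin n // j ≠ p}, ∃ t, v t = j) then ofp (PV p v) else 0)
    = ∑ S ∈ (Finset.univ : Finset {j : Fin n // j ≠ p}).powerset,
        (-1 : ℂ) ^ (Fintype.card {j : Fin n // j ≠ p} - S.card) • (XS p S) ^ r := by
  have expand : ∀ S ∈ (Finset.univ : Finset {j : Fin n // j ≠ p}).powerset,
      (-1 : ℂ) ^ (Fintype.card {j : Fin n // j ≠ p} - S.card) • (XS p S) ^ r
      = ∑ v : Fin r → {j : Fin n // j ≠ p},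
          (if Finset.image v Finset.univ ⊆ S
            then (-1 : ℂ) ^ (Fintype.card {j : Fin n // j ≠ p} - S.card) else 0) • ofp (PV p v) := by
    intro S _
    rw [B1, Finset.smul_sum]
    refine Finset.sum_congr rfl fun v _ => ?_
    rw [ite_smul, zero_smul]
    have : (∀ t, v t ∈ S) ↔ Finset.image v Finset.univ ⊆ S := by
      rw [Finset.image_subset_iff]
      exact ⟨fun h t _ => h t, fun h t => h t (Finset.mem_univ t)⟩
    by_cases hc : ∀ t, v t ∈ S
    · rw [if_pos hc, if_pos (this.mp hc)]
    · rw [if_neg hc, if_neg (fun hx => hc (this.mpr hx)), smul_zero]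
  rw [Finset.sum_congr rfl expand, Finset.sum_comm]
  refine Finset.sum_congr rfl fun v _ => ?_
  rw [← Finset.sum_smul, coeff_lemma (Finset.image v Finset.univ)]
  have himg : (Finset.image v Finset.univ = Finset.univ)
      ↔ (∀ j : {j : Fin n // j ≠ p}, ∃ t, v t = j) := by
    rw [Finset.eq_univ_iff_forall]
    constructor
    · intro h j
      obtain ⟨t, _, ht⟩ := Finset.mem_image.mp (h j)
      exact ⟨t, ht⟩
    · intro h j
      obtain ⟨t, ht⟩ := h j
      exact Finset.mem_image.mpr ⟨t, Finset.mem_univ t, ht⟩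
  by_cases hcov : ∀ j : {j : Fin n // j ≠ p}, ∃ t, v t = j
  · rw [if_pos (himg.mpr hcov), if_pos hcov, one_smul]
  · rw [if_neg (fun hx => hcov (himg.mp hx)), if_neg hcov, zero_smul]

lemma cond_iff (p : Fin n) {r : ℕ} (v : Fin r → {j : Fin n // j ≠ p}) :
    (∀ x y : Fin n, ∃ g ∈ Subgroup.closure
        (Set.range fun t => Equiv.swap ((v t : Fin n)) p), g x = y)
    ↔ (∀ j : {j : Fin n // j ≠ p}, ∃ t, v t = j) := by
  constructor
  · intro h j
    obtain ⟨g, hg, hgp⟩ := h p (j : Fin n)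
    set M : Fin n → Prop := fun x => x = p ∨ ∃ t, (v t : Fin n) = x with hM
    have key : ∀ g ∈ Subgroup.closure
        (Set.range fun t => Equiv.swap ((v t : Fin n)) p), ∀ x, (M x ↔ M (g x)) := by
      intro g hg
      refine Subgroup.closure_induction ?_ ?_ ?_ ?_ hg
      · rintro x ⟨t, rfl⟩ z
        by_cases hz1 : z = (v t : Fin n)
        · subst hz1
          rw [Equiv.swap_apply_left]
          constructor
          · intro _; exact Or.inl rfl
          · intro _; exact Or.inr ⟨t, rfl⟩
        by_cases hz2 : z = p
        · subst hz2
          rw [Equiv.swap_apply_right]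
          constructor
          · intro _; exact Or.inr ⟨t, rfl⟩
          · intro _; exact Or.inl rfl
        · rw [Equiv.swap_apply_of_ne_of_ne hz1 hz2]
      · intro z; simp
      · intro a b _ _ ha hb z
        exact (hb z).trans (ha (b z))
      · intro a _ ha z
        have := ha (a⁻¹ z)
        rw [show a (a⁻¹ z) = z from a.apply_symm_apply z] at this
        exact this.symm
    have hMp : M p := Or.inl rfl
    have := (key g hg p).mp hMp
    rw [hgp] at this
    rcases this with h1 | ⟨t, ht⟩
    · exact absurd h1 j.2
    · exact ⟨t, Subtype.ext ht⟩
  · intro h x y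
    have helper : ∀ z : Fin n, ∃ g ∈ Subgroup.closure
        (Set.range fun t => Equiv.swap ((v t : Fin n)) p), g z = p := by
      intro z
      by_cases hz : z = p
      · exact ⟨1, Subgroup.one_mem _, by simp [hz]⟩
      · obtain ⟨t, ht⟩ := h ⟨z, hz⟩
        refine ⟨Equiv.swap ((v t : Fin n)) p,
          Subgroup.subset_closure ⟨t, rfl⟩, ?_⟩
        have : (v t : Fin n) = z := congrArg Subtype.val ht
        rw [this, Equiv.swap_apply_left]
    obtain ⟨gx, hgx, hgxp⟩ := helper x
    obtain ⟨gy, hgy, hgyp⟩ := helper y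
    refine ⟨gy⁻¹ * gx, Subgroup.mul_mem _ (Subgroup.inv_mem _ hgy) hgx, ?_⟩
    have : gy⁻¹ p = y := by rw [← hgyp]; exact gy.symm_apply_apply y
    rw [Equiv.Perm.mul_apply, hgxp, this]


noncomputable def T0 (p : Fin n) (r : ℕ) : MonoidAlgebra ℂ (Equiv.Perm (Fin n)) :=
  ∑ v : Fin r → {j : Fin n // j ≠ p},
    if (∀ j : {j : Fin n // j ≠ p}, ∃ t, v t = j) then ofp (PV p v) else 0

lemma D1 (p : Fin n) (r : ℕ) (g : Equiv.Perm (Fin n)) (hgp : g p = p) :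
    ofp g * T0 p r = T0 p r * ofp g := by
  classical
  set κ := {j : Fin n // j ≠ p}
  have hinj : ∀ j : κ, g (j : Fin n) ≠ p := by
    intro j hc
    exact j.2 (g.injective (by rw [hc, hgp]))
  set e : κ ≃ κ :=
    { toFun := fun j => ⟨g (j : Fin n), hinj j⟩
      invFun := fun j => ⟨g⁻¹ (j : Fin n), fun hc => j.2 (by
        simpa [hgp] using congrArg g hc)⟩
      left_inv := fun j => Subtype.ext (g.symm_apply_apply _)
      right_inv := fun j => Subtype.ext (g.apply_symm_apply _) } with he
  have hconj : ∀ (v : Fin r → κ), PV p (fun t => e (v t)) = g * PV p v * g⁻¹ := by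
    intro v
    have h1 : ∀ t : Fin r, Equiv.swap ((e (v t) : Fin n)) p
        = (MulAut.conj g) (Equiv.swap ((v t : Fin n)) p) := by
      intro t
      rw [MulAut.conj_apply]
      show Equiv.swap (g ((v t) : Fin n)) p = g * Equiv.swap ((v t : Fin n)) p * g⁻¹
      have h2 := Equiv.swap_apply_apply g ((v t : Fin n)) p
      rw [hgp] at h2
      exact h2
    unfold PV
    calc (List.ofFn fun t => Equiv.swap ((e (v t) : Fin n)) p).prod
        = (List.ofFn fun t => (MulAut.conj g) (Equiv.swap ((v t : Fin n)) p)).prod := by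
          exact congrArg List.prod (congrArg List.ofFn (funext h1))
      _ = (List.map (MulAut.conj g) (List.ofFn fun t => Equiv.swap ((v t : Fin n)) p)).prod := by
          rw [List.map_ofFn]; rfl
      _ = (MulAut.conj g) (List.ofFn fun t => Equiv.swap ((v t : Fin n)) p).prod := by
          rw [← map_list_prod]
      _ = g * PV p v * g⁻¹ := by rw [MulAut.conj_apply]; rfl
  have hcov : ∀ (v : Fin r → κ),
      (∀ j : κ, ∃ t, e (v t) = j) ↔ (∀ j : κ, ∃ t, v t = j) := by
    intro v
    constructor
    · intro h j
      obtain ⟨t, ht⟩ := h (e j)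
      exact ⟨t, e.injective ht⟩
    · intro h j
      obtain ⟨t, ht⟩ := h (e.symm j)
      exact ⟨t, by rw [ht, Equiv.apply_symm_apply]⟩
  unfold T0
  rw [Finset.mul_sum, Finset.sum_mul]
  have hbij : Function.Bijective (fun (v : Fin r → κ) => (fun t => e (v t))) := by
    constructor
    · intro v w h
      funext t
      exact e.injective (congrFun h t)
    · intro w
      exact ⟨fun t => e.symm (w t), funext fun t => e.apply_symm_apply _⟩
  refine Fintype.sum_bijective _ hbij _ _ ?_
  intro v
  rw [mul_ite, mul_zero, ite_mul, zero_mul]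
  by_cases hc : ∀ j : κ, ∃ t, v t = j
  · rw [if_pos hc, if_pos ((hcov v).mpr hc), hconj]
    rw [← ofp_mul, ← ofp_mul]
    congr 1
    group
  · rw [if_neg hc, if_neg (fun hx => hc ((hcov v).mp hx))]


private lemma conj_pow {R : Type*} [Ring R] {e : R} (he : e * e = 1) (A : R) :
    ∀ r : ℕ, e * A ^ r * e = (e * A * e) ^ r := by
  intro r
  induction r with
  | zero => simpa using he
  | succ r ih =>
    rw [pow_succ, pow_succ, ← ih]
    have : e * (A ^ r * A) * e = (e * A ^ r * e) * (e * A * e) := by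
      have h2 : e * A ^ r * e * (e * A * e) = e * A ^ r * (e * e) * A * e := by
        noncomm_ring
      rw [h2, he]
      noncomm_ring
    rw [this]

lemma D2 (p : Fin n) (r : ℕ) (q : Fin n) (hqp : q ≠ p) :
    ofp (Equiv.swap q p) * T0 p r = T0 p r * ofp (Equiv.swap q p) := by
  classical
  set κ := {j : Fin n // j ≠ p}
  set e : MonoidAlgebra ℂ (Equiv.Perm (Fin n)) := ofp (Equiv.swap q p) with hedef
  have he : e * e = 1 := by
    rw [hedef, ← ofp_mul, Equiv.swap_mul_self, ofp_one]
  set N := Fintype.card κ with hN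
  set qh : κ := ⟨q, hqp⟩ with hqh
  have hT : T0 p r = ∑ F ∈ ((Finset.univ : Finset κ).erase qh).powerset,
      (-1 : ℂ) ^ (N - 1 - F.card) • ((XS p F + e) ^ r - (XS p F) ^ r) := by
    have hTb : T0 p r = ∑ S ∈ (Finset.univ : Finset κ).powerset,
        (-1 : ℂ) ^ (N - S.card) • (XS p S) ^ r := B2 p r
    rw [hTb]
    rw [show ((Finset.univ : Finset κ).powerset)
        = (insert qh ((Finset.univ : Finset κ).erase qh)).powerset from by
      rw [Finset.insert_erase (Finset.mem_univ qh)]]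
    rw [Finset.sum_powerset_insert (Finset.notMem_erase qh Finset.univ)]
    rw [← Finset.sum_add_distrib]
    refine Finset.sum_congr rfl fun F hF => ?_
    have hFsub : F ⊆ (Finset.univ : Finset κ).erase qh := Finset.mem_powerset.mp hF
    have hqF : qh ∉ F := fun hc => (Finset.notMem_erase qh Finset.univ) (hFsub hc)
    have hcard : F.card ≤ N - 1 := by
      have h1 : ((Finset.univ : Finset κ).erase qh).card = N - 1 := by
        rw [Finset.card_erase_of_mem (Finset.mem_univ qh), Finset.card_univ]
      rw [← h1]
      exact Finset.card_le_card hFsub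
    have hN1 : 1 ≤ N := by
      rw [hN, ← Finset.card_univ]
      exact Finset.card_pos.mpr ⟨qh, Finset.mem_univ qh⟩
    have hXins : XS p (insert qh F) = XS p F + e := by
      rw [XS, Finset.sum_insert hqF, hedef]
      rw [add_comm]
      rfl
    have hc1 : (-1 : ℂ) ^ (N - F.card) = -(-1 : ℂ) ^ (N - 1 - F.card) := by
      rw [show N - F.card = (N - 1 - F.card) + 1 by omega, pow_succ]
      ring
    have hc2 : (-1 : ℂ) ^ (N - (insert qh F).card) = (-1 : ℂ) ^ (N - 1 - F.card) := by
      rw [Finset.card_insert_of_notMem hqF]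
      congr 1
      omega
    rw [hXins, hc1, hc2]
    module
  have hconj : ∀ F ∈ ((Finset.univ : Finset κ).erase qh).powerset,
      e * (((XS p F + e) ^ r - (XS p F) ^ r)) * e
        = (XS p F + e) ^ r - (XS p F) ^ r := by
    intro F hF
    have hFsub : F ⊆ (Finset.univ : Finset κ).erase qh := Finset.mem_powerset.mp hF
    have haq : ∀ a ∈ F, (a : Fin n) ≠ q := by
      intro a ha hc
      have h2 : a = qh := Subtype.ext hc
      rw [h2] at ha
      exact (Finset.notMem_erase qh Finset.univ) (hFsub ha)
    have hap : ∀ a ∈ F, (a : Fin n) ≠ p := fun a _ => a.2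
    set X := XS p F with hX
    set Y : MonoidAlgebra ℂ (Equiv.Perm (Fin n)) :=
      ∑ a ∈ F, ofp (Equiv.swap (a : Fin n) q) with hY
    have rel1 : e * X = Y * e := by
      rw [hX, XS, hY, Finset.mul_sum, Finset.sum_mul]
      refine Finset.sum_congr rfl fun a ha => ?_
      rw [hedef, ← ofp_mul, ← ofp_mul]
      congr 1
      exact swapI2 (hap a ha) (haq a ha) hqp
    have rel2 : X * e = e * Y := by
      rw [hX, XS, hY, Finset.mul_sum, Finset.sum_mul]
      refine Finset.sum_congr rfl fun a ha => ?_
      rw [hedef, ← ofp_mul, ← ofp_mul]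
      congr 1
      exact swapI3 (hap a ha) (haq a ha) hqp
    have rel4 : Commute (X + e) Y := by
      refine Commute.sum_right _ _ _ fun a ha => ?_
      have hsplit : X + e = (ofp (Equiv.swap (a : Fin n) p) + e)
          + ∑ b ∈ F.erase a, ofp (Equiv.swap (b : Fin n) p) := by
        rw [hX, XS, ← Finset.add_sum_erase _ _ ha]
        abel
      rw [hsplit]
      refine Commute.add_left ?_ ?_
      · show (ofp (Equiv.swap (a : Fin n) p) + e) * ofp (Equiv.swap (a : Fin n) q)
          = ofp (Equiv.swap (a : Fin n) q) * (ofp (Equiv.swap (a : Fin n) p) + e)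
        rw [add_mul, mul_add, hedef, ← ofp_mul, ← ofp_mul, ← ofp_mul, ← ofp_mul]
        rw [swapI4 (hap a ha) (haq a ha) hqp, swapI5 (hap a ha) (haq a ha) hqp]
        rw [add_comm]
      · refine Commute.sum_left _ _ _ fun b hb => ?_
        have hbF : b ∈ F := Finset.mem_of_mem_erase hb
        have hba : b ≠ a := Finset.ne_of_mem_erase hb
        show ofp (Equiv.swap (b : Fin n) p) * ofp (Equiv.swap (a : Fin n) q)
          = ofp (Equiv.swap (a : Fin n) q) * ofp (Equiv.swap (b : Fin n) p)
        rw [← ofp_mul, ← ofp_mul]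
        congr 1
        exact swapDisj (fun hc => hba (Subtype.ext hc.symm)) (hap a ha) (haq a ha)
          (hap b hbF) (haq b hbF) hqp.symm
    have hXe : e * X * e = Y := by
      rw [rel1, mul_assoc, he, mul_one]
    have hXe2 : e * (X + e) * e = Y + e := by
      rw [mul_add, add_mul, hXe, mul_assoc, he, mul_one]
    have hkey := key_identity rel1 rel2 rel4 r
    calc e * ((X + e) ^ r - X ^ r) * e
        = (e * (X + e) * e) ^ r - (e * X * e) ^ r := by
          rw [mul_sub, sub_mul, conj_pow he (X + e) r, conj_pow he X r]
      _ = (Y + e) ^ r - Y ^ r := by rw [hXe, hXe2]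
      _ = (X + e) ^ r - X ^ r := hkey.symm
  rw [hT, Finset.mul_sum, Finset.sum_mul]
  refine Finset.sum_congr rfl fun F hF => ?_
  rw [mul_smul_comm, smul_mul_assoc]
  congr 1
  have h := hconj F hF
  calc e * ((XS p F + e) ^ r - (XS p F) ^ r)
      = e * ((XS p F + e) ^ r - (XS p F) ^ r) * (e * e) := by rw [he, mul_one]
    _ = (e * ((XS p F + e) ^ r - (XS p F) ^ r) * e) * e := by noncomm_ring
    _ = ((XS p F + e) ^ r - (XS p F) ^ r) * e := by rw [h]

lemma ofp_commute (p : Fin n) (r : ℕ) (sigma : Equiv.Perm (Fin n)) :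
    ofp sigma * T0 p r = T0 p r * ofp sigma := by
  refine Equiv.Perm.swap_induction_on sigma ?_ ?_
  · rw [ofp_one, one_mul, mul_one]
  · intro f x y hxy hf
    have hs : ofp (Equiv.swap x y) * T0 p r = T0 p r * ofp (Equiv.swap x y) := by
      by_cases hyp : y = p
      · rw [hyp]
        exact D2 p r x (hyp ▸ hxy)
      by_cases hxp : x = p
      · rw [hxp, Equiv.swap_comm]
        exact D2 p r y hyp
      · refine D1 p r (Equiv.swap x y) ?_
        exact Equiv.swap_apply_of_ne_of_ne (Ne.symm hxp) (Ne.symm hyp)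
    rw [ofp_mul]
    calc ofp (Equiv.swap x y) * ofp f * T0 p r
        = ofp (Equiv.swap x y) * (ofp f * T0 p r) := by rw [mul_assoc]
      _ = ofp (Equiv.swap x y) * (T0 p r * ofp f) := by rw [hf]
      _ = (ofp (Equiv.swap x y) * T0 p r) * ofp f := by rw [mul_assoc]
      _ = (T0 p r * ofp (Equiv.swap x y)) * ofp f := by rw [hs]
      _ = T0 p r * (ofp (Equiv.swap x y) * ofp f) := by rw [mul_assoc]

lemma T0_central (p : Fin n) (r : ℕ) (y : MonoidAlgebra ℂ (Equiv.Perm (Fin n))) :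
    T0 p r * y = y * T0 p r := by
  induction y using MonoidAlgebra.induction_on with
  | of g => exact (ofp_commute p r g).symm
  | add f g hf hg => rw [mul_add, add_mul, hf, hg]
  | smul c f hf => rw [mul_smul_comm, smul_mul_assoc, hf]

end TPC

/-- the transitive power `T Xₙʳ` lies in the centre of `ℂSₙ`. -/
theorem transitivePower_central (n : ℕ) (hn : 1 ≤ n) (r : ℕ) :
    ∀ y : MonoidAlgebra ℂ (Equiv.Perm (Fin n)),
      transitivePower n r ⟨n - 1, by omega⟩ * y =
        y * transitivePower n r ⟨n - 1, by omega⟩ := by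
  intro y
  have hstep : transitivePower n r ⟨n - 1, by omega⟩ = TPC.T0 ⟨n - 1, by omega⟩ r := by
    unfold transitivePower TPC.T0
    refine Finset.sum_congr rfl fun v _ => ?_
    exact if_congr (TPC.cond_iff _ v) rfl rfl
  rw [hstep]
  exact TPC.T0_central _ r y
end

section
/- Let α be a partition of n with m parts and let σ ∈ K_α. If σ admits a transitive ordered factorization into r star transpositions with pivot n, then r = n+m−2+2g for some integer g ≥ 0; equivalently, r ≥ n+m−2 and r−(n+m−2) is even. -/
open scoped Classical

namespace StarFactAux

open Equiv Equiv.Perm Module Finset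

variable {n : ℕ}

/-- The fixed subspace of a permutation acting on functions. -/
noncomputable def fixSub (f : Equiv.Perm (Fin n)) : Submodule ℚ (Fin n → ℚ) where
  carrier := {v | ∀ x, v (f x) = v x}
  add_mem' := by intro a b ha hb x; simp [ha x, hb x]
  zero_mem' := by intro x; rfl
  smul_mem' := by intro c v hv x; simp [hv x]

lemma mem_fixSub {f : Equiv.Perm (Fin n)} {v : Fin n → ℚ} :
    v ∈ fixSub f ↔ ∀ x, v (f x) = v x := Iff.rfl

/-- Number of cycles (including fixed points) as dimension of fixed space. -/
noncomputable def cdim (f : Equiv.Perm (Fin n)) : ℕ := finrank ℚ (fixSub f)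

lemma fixSub_one : fixSub (1 : Equiv.Perm (Fin n)) = ⊤ := by
  ext v; simp [mem_fixSub]

lemma cdim_one : cdim (1 : Equiv.Perm (Fin n)) = n := by
  rw [cdim, fixSub_one, finrank_top, Module.finrank_fintype_fun_eq_card, Fintype.card_fin]

lemma fixSub_mul (f g : Equiv.Perm (Fin n)) : fixSub f ⊓ fixSub g ≤ fixSub (f * g) := by
  rintro v ⟨hf, hg⟩ x
  have : v (f (g x)) = v (g x) := hf (g x)
  simpa [Equiv.Perm.mul_apply, hg x] using this

lemma cdim_swap (p a : Fin n) (h : p ≠ a) : n ≤ cdim (Equiv.swap p a) + 1 := by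
  set φ : (Fin n → ℚ) →ₗ[ℚ] ℚ := (LinearMap.proj p : (Fin n → ℚ) →ₗ[ℚ] ℚ) - (LinearMap.proj a : (Fin n → ℚ) →ₗ[ℚ] ℚ) with hφ
  have hker : LinearMap.ker φ ≤ fixSub (Equiv.swap p a) := by
    intro v hv x
    have hv' : v p = v a := by
      have : φ v = 0 := hv
      simpa [hφ, sub_eq_zero] using this
    rcases eq_or_ne x p with rfl | hxp
    · simpa [Equiv.swap_apply_left] using hv'.symm
    rcases eq_or_ne x a with rfl | hxa
    · simpa [Equiv.swap_apply_right] using hv'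
    · rw [Equiv.swap_apply_of_ne_of_ne hxp hxa]
  have h1 := LinearMap.finrank_range_add_finrank_ker φ
  have h2 : finrank ℚ (LinearMap.range φ) ≤ 1 := by
    have := Submodule.finrank_le (LinearMap.range φ)
    simpa using this
  have h3 : finrank ℚ (LinearMap.ker φ) ≤ cdim (Equiv.swap p a) :=
    Submodule.finrank_mono hker
  have h4 : finrank ℚ (Fin n → ℚ) = n := by
    rw [Module.finrank_fintype_fun_eq_card, Fintype.card_fin]
  omega

lemma cdim_mul_ge (g s : Equiv.Perm (Fin n)) : cdim g + cdim s ≤ cdim (g * s) + n := by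
  have h1 := Submodule.finrank_sup_add_finrank_inf_eq (fixSub g) (fixSub s)
  have h2 : finrank ℚ ↥(fixSub g ⊔ fixSub s) ≤ n := by
    have := Submodule.finrank_le (fixSub g ⊔ fixSub s)
    rwa [Module.finrank_fintype_fun_eq_card, Fintype.card_fin] at this
  have h3 : finrank ℚ ↥(fixSub g ⊓ fixSub s) ≤ cdim (g * s) :=
    Submodule.finrank_mono (fixSub_mul g s)
  unfold cdim at *
  omega

lemma cdim_mul_swap_le (f : Equiv.Perm (Fin n)) (p a : Fin n) (h : p ≠ a) :
    cdim (f * Equiv.swap p a) ≤ cdim f + 1 := by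
  have h1 := cdim_mul_ge (f * Equiv.swap p a) (Equiv.swap p a)
  rw [mul_assoc, Equiv.swap_mul_self, mul_one] at h1
  have h2 := cdim_swap p a h
  omega

lemma cdim_mul_swap_lt (f : Equiv.Perm (Fin n)) (p a : Fin n) (h : p ≠ a)
    (ha : f a = a) : cdim (f * Equiv.swap p a) < cdim f := by
  apply Submodule.finrank_lt_finrank_of_lt
  rw [SetLike.lt_iff_le_and_exists]
  constructor
  · intro v hv
    have hva : v a = v p := by
      have := hv p
      simpa [Equiv.Perm.mul_apply, Equiv.swap_apply_left, ha] using this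
    intro x
    rcases eq_or_ne x p with rfl | hxp
    · have := hv a
      rw [Equiv.Perm.mul_apply, Equiv.swap_apply_right] at this
      rw [this, hva]
    rcases eq_or_ne x a with rfl | hxa
    · rw [ha]
    · have := hv x
      rwa [Equiv.Perm.mul_apply, Equiv.swap_apply_of_ne_of_ne hxp hxa] at this
  · refine ⟨fun y => if y = a then 1 else 0, ?_, ?_⟩
    · intro x
      have : f x = a ↔ x = a := by
        constructor
        · intro hx; exact f.injective (by rw [hx, ha])
        · rintro rfl; exact ha
      simp [this]
    · intro hv
      have := hv p
      simp only [Equiv.Perm.mul_apply, Equiv.swap_apply_left, ha] at this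
      simp [h.symm, h] at this

lemma prod_map_swap_fixes (p : Fin n) (L : List (Fin n)) (x : Fin n) (hx : x ≠ p)
    (hxL : x ∉ L) : (L.map fun b => Equiv.swap p b).prod x = x := by
  induction L with
  | nil => rfl
  | cons b M ih =>
    have hxb : x ≠ b := by intro h; exact hxL (h ▸ (List.mem_cons_self : b ∈ b :: M))
    have hxM : x ∉ M := fun h => hxL (List.mem_cons_of_mem _ h)
    simp only [List.map_cons, List.prod_cons, Equiv.Perm.mul_apply, ih hxM]
    exact Equiv.swap_apply_of_ne_of_ne hx hxb

/-- The key inductive bound. -/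
lemma key_bound (p : Fin n) (L : List (Fin n)) (hL : ∀ b ∈ L, b ≠ p) :
    cdim (L.map fun b => Equiv.swap p b).prod + 2 * L.toFinset.card ≤ L.length + n := by
  induction L using List.reverseRecOn with
  | nil => simp [cdim_one]
  | append_singleton M b ih =>
    have hbp : b ≠ p := hL b (by simp)
    have hM : ∀ c ∈ M, c ≠ p := fun c hc => hL c (by simp [hc])
    have hih := ih hM
    rw [List.map_append, List.prod_append, List.toFinset_append, List.length_append]
    simp only [List.map_cons, List.map_nil, List.prod_cons, List.prod_nil, mul_one,
      List.toFinset_cons, List.toFinset_nil, LawfulSingleton.insert_empty_eq, List.length_cons,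
      List.length_nil]
    set π := (M.map fun b => Equiv.swap p b).prod with hπ
    by_cases hbM : b ∈ M.toFinset
    · have hcard : (M.toFinset ∪ {b}).card = M.toFinset.card := by
        rw [Finset.union_comm, ← Finset.insert_eq, Finset.insert_eq_self.mpr hbM]
      have := cdim_mul_swap_le π p b hbp.symm
      omega
    · have hfix : π b = b := prod_map_swap_fixes p M b hbp (by
        intro h; exact hbM (List.mem_toFinset.mpr h))
      have hlt := cdim_mul_swap_lt π p b hbp.symm hfix
      have hcard : (M.toFinset ∪ {b}).card = M.toFinset.card + 1 := by
        rw [Finset.union_comm, ← Finset.insert_eq, Finset.card_insert_of_notMem hbM]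
      omega


lemma neg_one_pow_eq_iff_even_add {x y : ℕ} (h : ((-1 : ℤˣ)) ^ x = (-1) ^ y) :
    Even (x + y) := by
  rcases Nat.even_or_odd (x + y) with he | ho
  · exact he
  · exfalso
    have h1 : ((-1 : ℤˣ)) ^ (x + y) = 1 := by
      rw [pow_add, h, ← pow_add]
      exact Even.neg_one_pow ⟨y, rfl⟩
    rw [Odd.neg_one_pow ho] at h1
    exact absurd h1 (by decide)

lemma apply_mem_support_cf {σ c : Equiv.Perm (Fin n)} (hc : c ∈ σ.cycleFactorsFinset)
    (x : Fin n) : σ x ∈ c.support ↔ x ∈ c.support := by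
  obtain ⟨hcyc, hcs⟩ := Equiv.Perm.mem_cycleFactorsFinset_iff.mp hc
  constructor
  · intro h
    have h2 : c⁻¹ (σ x) ∈ c.support := by
      have h3 := Equiv.Perm.apply_mem_support (f := c⁻¹) (x := σ x)
      rw [Equiv.Perm.support_inv] at h3
      exact h3.mpr h
    have h3 : σ (c⁻¹ (σ x)) = σ x := by
      rw [← hcs _ h2]; exact c.apply_symm_apply _
    have h4 := σ.injective h3
    rwa [h4] at h2
  · intro h
    rw [← hcs x h]
    exact Equiv.Perm.apply_mem_support.mpr h

lemma card_le_cdim (σ : Equiv.Perm (Fin n)) :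
    Multiset.card σ.cycleType + (n - σ.support.card) ≤ cdim σ := by
  classical
  have hnonempty : ∀ c : {c // c ∈ σ.cycleFactorsFinset},
      ((c : Equiv.Perm (Fin n))).support.Nonempty := by
    intro c
    rw [Finset.nonempty_iff_ne_empty, Ne, Equiv.Perm.support_eq_empty_iff]
    exact (Equiv.Perm.mem_cycleFactorsFinset_iff.mp c.2).1.ne_one
  set u : ({c // c ∈ σ.cycleFactorsFinset} ⊕ {x : Fin n // x ∉ σ.support}) → (Fin n → ℚ) := Sum.elim
    (fun c => fun x => if x ∈ (c : Equiv.Perm (Fin n)).support then 1 else 0)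
    (fun z => fun x => if x = (z : Fin n) then 1 else 0) with hu
  set w : ({c // c ∈ σ.cycleFactorsFinset} ⊕ {x : Fin n // x ∉ σ.support}) → Fin n := Sum.elim (fun c => (hnonempty c).choose) (fun z => z) with hw
  have hw1 : ∀ i, u i (w i) = 1 := by
    rintro (c | z)
    · simp only [hu, hw, Sum.elim_inl]
      rw [if_pos (hnonempty c).choose_spec]
    · simp [hu, hw]
  have hw0 : ∀ i j, j ≠ i → u j (w i) = 0 := by
    rintro (c | z) (c' | z') hne
    · have hcc : (c' : Equiv.Perm (Fin n)) ≠ (c : Equiv.Perm (Fin n)) := by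
        intro h; exact hne (congrArg Sum.inl (Subtype.ext h))
      have hdisj := ((σ.cycleFactorsFinset_pairwise_disjoint)
        (Finset.mem_coe.mpr c'.2) (Finset.mem_coe.mpr c.2) hcc).disjoint_support
      have hwm : (hnonempty c).choose ∈ (c : Equiv.Perm (Fin n)).support :=
        (hnonempty c).choose_spec
      have hnot : (hnonempty c).choose ∉ (c' : Equiv.Perm (Fin n)).support :=
        Finset.disjoint_right.mp hdisj hwm
      simp only [hu, hw, Sum.elim_inl]
      rw [if_neg hnot]
    · have hwm : (hnonempty c).choose ∈ (c : Equiv.Perm (Fin n)).support :=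
        (hnonempty c).choose_spec
      have hwσ : (hnonempty c).choose ∈ σ.support :=
        Equiv.Perm.mem_cycleFactorsFinset_support_le c.2 hwm
      have hne' : (hnonempty c).choose ≠ (z' : Fin n) := fun h => z'.2 (h ▸ hwσ)
      simp only [hu, hw, Sum.elim_inl, Sum.elim_inr]
      rw [if_neg hne']
    · have hnot : (z : Fin n) ∉ (c' : Equiv.Perm (Fin n)).support := fun h =>
        z.2 (Equiv.Perm.mem_cycleFactorsFinset_support_le c'.2 h)
      simp only [hu, hw, Sum.elim_inl, Sum.elim_inr]
      rw [if_neg hnot]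
    · have hne' : (z : Fin n) ≠ (z' : Fin n) := by
        intro h; exact hne (congrArg Sum.inr (Subtype.ext h.symm))
      simp only [hu, hw, Sum.elim_inr]
      rw [if_neg hne']
  have hmem : ∀ i, u i ∈ fixSub σ := by
    rintro (c | z)
    · intro x
      simp only [hu, Sum.elim_inl]
      simp only [apply_mem_support_cf c.2]
    · intro x
      have hz : σ (z : Fin n) = (z : Fin n) := by
        have h := z.2; rwa [Equiv.Perm.notMem_support] at h
      have hiff : σ x = (z : Fin n) ↔ x = (z : Fin n) :=
        ⟨fun h => σ.injective (by rw [h, hz]), fun h => by rw [h, hz]⟩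
      simp only [hu, Sum.elim_inr]
      simp only [hiff]
  have hli : LinearIndependent ℚ u := by
    rw [linearIndependent_iff']
    intro s g hg i hi
    have h0 := congrFun hg (w i)
    rw [Finset.sum_apply] at h0
    simp only [Pi.smul_apply, smul_eq_mul, Pi.zero_apply] at h0
    rw [Finset.sum_eq_single i (fun j _ hj => by rw [hw0 i j hj, mul_zero])
      (fun h => absurd hi h)] at h0
    rwa [hw1 i, mul_one] at h0
  have hli' : LinearIndependent ℚ (fun i => (⟨u i, hmem i⟩ : ↥(fixSub σ))) :=
    LinearIndependent.of_comp (fixSub σ).subtype hli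
  have hcard := hli'.fintype_card_le_finrank
  have hcι : Fintype.card ({c // c ∈ σ.cycleFactorsFinset} ⊕ {x : Fin n // x ∉ σ.support})
      = σ.cycleFactorsFinset.card + (n - σ.support.card) := by
    rw [Fintype.card_sum, Fintype.card_coe]
    congr 1
    rw [Fintype.card_subtype_compl, Fintype.card_fin]
    congr 1
    exact Fintype.card_coe _
  have hct : Multiset.card σ.cycleType = σ.cycleFactorsFinset.card := by
    rw [Equiv.Perm.cycleType]; simp
  rw [hct, ← hcι]
  exact hcard


end StarFactAux

/-- if `σ ∈ K_α` (with `α ⊢ n` having `m` parts) admits a transitive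
ordered factorization into `r` star transpositions with pivot `n`, then
`r = n + m - 2 + 2g` for some `g ≥ 0`. -/
theorem starFact_genus (n m r : ℕ) (hn : 1 ≤ n) (hm : 1 ≤ m)
    (α : Fin m → ℕ) (hpos : ∀ j, 0 < α j) (hmono : Monotone α)
    (hsum : ∑ j, α j = n)
    (σ : Equiv.Perm (Fin n)) (hσ : fullCycleType σ = ↑(List.ofFn α))
    (τ : Fin r → Equiv.Perm (Fin n))
    (hstar : ∀ t, ∃ a : Fin n, a ≠ (⟨n - 1, by omega⟩ : Fin n) ∧
      τ t = Equiv.swap ⟨n - 1, by omega⟩ a)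
    (hprod : (List.ofFn τ).prod = σ)
    (htrans : ∀ x y : Fin n, ∃ g ∈ Subgroup.closure (Set.range τ), g x = y) :
    ∃ g : ℕ, r = n + m - 2 + 2 * g := by
    classical
  set p : Fin n := ⟨n - 1, by omega⟩ with hpdef
  choose a ha hτ using hstar
  set L : List (Fin n) := List.ofFn a with hLdef
  have hLlen : L.length = r := by rw [hLdef, List.length_ofFn]
  have hmemL : ∀ b ∈ L, b ≠ p := by
    intro b hb
    rw [hLdef, List.mem_ofFn] at hb
    obtain ⟨t, rfl⟩ := hb
    exact ha t
  have hmap : (L.map fun b => Equiv.swap p b) = List.ofFn τ := by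
    rw [hLdef, List.map_ofFn]
    exact congrArg List.ofFn (funext fun t => (hτ t).symm)
  have hprod' : (L.map fun b => Equiv.swap p b).prod = σ := by rw [hmap, hprod]
  have hkey := StarFactAux.key_bound p L hmemL
  rw [hprod', hLlen] at hkey
  have hsubset : Finset.univ.erase p ⊆ L.toFinset := by
    intro b hb
    have hbp : b ≠ p := Finset.ne_of_mem_erase hb
    by_contra hbL
    have hfix : ∀ g ∈ Subgroup.closure (Set.range τ), g b = b := by
      intro g hg
      induction hg using Subgroup.closure_induction with
      | mem x hx =>
        obtain ⟨t, rfl⟩ := hx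
        rw [hτ t]
        refine Equiv.swap_apply_of_ne_of_ne hbp (fun hba => hbL ?_)
        rw [hba, hLdef]
        exact List.mem_toFinset.mpr (List.mem_ofFn.mpr ⟨t, rfl⟩)
      | one => rfl
      | mul x y hx hy ihx ihy => rw [Equiv.Perm.mul_apply, ihy, ihx]
      | inv x hx ihx =>
        have h2 := congrArg (fun z => x⁻¹ z) ihx
        simpa using h2.symm
    obtain ⟨g, hg, hgb⟩ := htrans b p
    exact hbp (by rw [← hfix g hg, hgb])
  have hcard1 : n - 1 ≤ L.toFinset.card := by
    have h := Finset.card_le_card hsubset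
    rwa [Finset.card_erase_of_mem (Finset.mem_univ p), Finset.card_univ,
      Fintype.card_fin] at h
  have hmcard : Multiset.card σ.cycleType + (n - σ.support.card) = m := by
    have h := congrArg Multiset.card hσ
    rwa [fullCycleType, Multiset.card_add, Multiset.card_replicate, Multiset.coe_card,
      List.length_ofFn] at h
  have hcdim : m ≤ StarFactAux.cdim σ := hmcard ▸ StarFactAux.card_le_cdim σ
  have hsc : σ.support.card ≤ n := by
    have h := Finset.card_le_univ σ.support
    rwa [Fintype.card_fin] at h
  have hswaps : ∀ g ∈ List.ofFn τ, g.IsSwap := by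
    intro g hg
    rw [List.mem_ofFn] at hg
    obtain ⟨t, rfl⟩ := hg
    exact ⟨p, a t, (ha t).symm, hτ t⟩
  have hsign : Equiv.Perm.sign σ = (-1 : ℤˣ) ^ r := by
    rw [← hprod, Equiv.Perm.sign_prod_list_swap hswaps, List.length_ofFn]
  have hsign2 := Equiv.Perm.sign_of_cycleType σ
  have hparity : Even (r + (σ.cycleType.sum + Multiset.card σ.cycleType)) :=
    StarFactAux.neg_one_pow_eq_iff_even_add (by rw [← hsign, hsign2])
  rw [Equiv.Perm.sum_cycleType] at hparity
  obtain ⟨k, hk⟩ := hparity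
  exact ⟨(r - (n + m - 2)) / 2, by omega⟩
end

section
/- (Pak's case) Let k ≥ 2, m ≥ 1 and n = mk + 1. Let σ ∈ S_n be a permutation fixing the pivot element n and having exactly m other cycles, each of length k. Then the number of transitive ordered factorizations of σ into n+m−1 star transpositions with pivot n equals ((n+m−1)!/n!) · k^m. -/
open scoped Classical

set_option linter.unusedSectionVars false

namespace StarFact

open Equiv Equiv.Perm Finset

variable {α : Type*} [DecidableEq α] [Fintype α]

lemma walk_eq (f g : Perm α) (x : α) (i : ℕ)
    (h : ∀ j < i, g ((f ^ j) x) = f ((f ^ j) x)) : (g ^ i) x = (f ^ i) x := by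
  induction i with
  | zero => rfl
  | succ i ih =>
    have h1 : (g ^ i) x = (f ^ i) x := ih fun j hj => h j (Nat.lt_succ_of_lt hj)
    rw [pow_succ', pow_succ', Equiv.Perm.mul_apply, Equiv.Perm.mul_apply, h1,
      h i (Nat.lt_succ_self i)]

lemma sc_nat {f : Perm α} {x y : α} : f.SameCycle x y ↔ ∃ i : ℕ, (f ^ i) x = y := by
  constructor
  · intro h
    obtain ⟨i, _, hi⟩ := h.exists_pow_eq'
    exact ⟨i, hi⟩
  · rintro ⟨i, hi⟩
    exact ⟨(i : ℤ), by simpa using hi⟩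

lemma fix_pow {f : Perm α} {x : α} (h : f x = x) : ∀ i : ℕ, (f ^ i) x = x := by
  intro i
  induction i with
  | zero => rfl
  | succ i ih => rw [pow_succ, Equiv.Perm.mul_apply, h, ih]

lemma pow_mod_fix {f : Perm α} {x : α} {i : ℕ} (h : (f ^ i) x = x) (j : ℕ) :
    (f ^ j) x = (f ^ (j % i)) x := by
  conv_lhs => rw [← Nat.mod_add_div j i]
  rw [pow_add, Equiv.Perm.mul_apply, pow_mul]
  congr 1
  exact fix_pow h _

lemma tau_apply (σ : Perm α) (p a y : α) : (Equiv.swap p a * σ) y = Equiv.swap p a (σ y) := rfl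

lemma swap_swap_mul (σ : Perm α) (p a : α) : Equiv.swap p a * (Equiv.swap p a * σ) = σ := by
  rw [← mul_assoc, Equiv.swap_mul_self, one_mul]

/-- Join: if `p` and `a` are in different cycles of `σ`, they are in the same
cycle of `swap p a * σ`. -/
lemma sameCycle_swap_mul (σ : Perm α) {p a : α} (h : ¬ σ.SameCycle p a) :
    (Equiv.swap p a * σ).SameCycle p a := by
  by_contra hc
  set τ := Equiv.swap p a * σ with hτ
  have hστ : ∀ y, σ y = Equiv.swap p a (τ y) := by
    intro y
    rw [hτ, tau_apply, Equiv.swap_apply_self]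
  -- x₀ := τ⁻¹ p is in the τ-cycle of p
  set x₀ := τ⁻¹ p with hx₀
  have hscx : τ.SameCycle p x₀ := ⟨-1, by simp [hx₀]⟩
  obtain ⟨i₀, hi₀⟩ := sc_nat.mp hscx
  have hP : ∃ i, (τ ^ i) p = x₀ := ⟨i₀, hi₀⟩
  set i := Nat.find hP with hi
  have hspec : (τ ^ i) p = x₀ := Nat.find_spec hP
  have hwalk : (σ ^ i) p = (τ ^ i) p := by
    apply walk_eq
    intro j hj
    rw [hστ ((τ ^ j) p)]
    rcases eq_or_ne (τ ((τ ^ j) p)) p with hp | hp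
    · exfalso
      have : (τ ^ j) p = x₀ := by
        rw [hx₀]
        exact (Equiv.eq_symm_apply τ).mpr hp
      exact Nat.find_min hP hj this
    rcases eq_or_ne (τ ((τ ^ j) p)) a with ha | ha
    · exfalso
      apply hc
      refine sc_nat.mpr ⟨j + 1, ?_⟩
      rw [pow_succ', Equiv.Perm.mul_apply]
      exact ha
    · rw [Equiv.swap_apply_of_ne_of_ne hp ha]
  have : (σ ^ (i + 1)) p = a := by
    rw [pow_succ', Equiv.Perm.mul_apply, hwalk, hspec, hστ x₀]
    have : τ x₀ = p := by simp [hx₀]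
    rw [this, Equiv.swap_apply_left]
  exact h (sc_nat.mpr ⟨i + 1, this⟩)

/-- Toggle: if `p` and `a` are in the same cycle of `σ`, then they are in
different cycles of `swap p a * σ`. -/
lemma not_sameCycle_swap_mul (σ : Perm α) {p a : α} (hpa : p ≠ a) (h : σ.SameCycle p a) :
    ¬ (Equiv.swap p a * σ).SameCycle p a := by
  set τ := Equiv.swap p a * σ with hτ
  have htapp : ∀ y, τ y = Equiv.swap p a (σ y) := fun y => rfl
  obtain ⟨i₀, hi₀⟩ := sc_nat.mp h
  have hP : ∃ i, (σ ^ i) p = a := ⟨i₀, hi₀⟩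
  set i := Nat.find hP with hi
  have hspec : (σ ^ i) p = a := Nat.find_spec hP
  have hipos : 0 < i := by
    rcases Nat.eq_zero_or_pos i with h1 | h1
    case inr => exact h1
    exfalso; apply hpa; rw [← hspec, h1, pow_zero]; rfl
  -- no earlier return to p
  have hnoret : ∀ j < i, (σ ^ j) p ≠ p ∨ j = 0 := by
    intro j hj
    rcases Nat.eq_zero_or_pos j with h0 | h0
    · exact Or.inr h0
    left
    intro hret
    have : (σ ^ (i % j)) p = a := by
      rw [← pow_mod_fix hret i, hspec]
    have hlt : i % j < i := lt_of_lt_of_le (Nat.mod_lt _ h0) hj.le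
    have := Nat.find_min hP hlt this
    exact this
  have hwalk : ∀ j, j ≤ i - 1 → (τ ^ j) p = (σ ^ j) p := by
    intro j hj
    apply walk_eq
    intro l hl
    rw [htapp ((σ ^ l) p)]
    have hl1 : l + 1 < i := by omega
    have hna : σ ((σ ^ l) p) ≠ a := by
      intro hcon
      apply Nat.find_min hP hl1
      rw [pow_succ', Equiv.Perm.mul_apply]; exact hcon
    have hnp : σ ((σ ^ l) p) ≠ p := by
      intro hcon
      have hret : (σ ^ (l + 1)) p = p := by rw [pow_succ', Equiv.Perm.mul_apply]; exact hcon
      rcases hnoret (l + 1) hl1 with h1 | h1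
      · exact h1 hret
      · omega
    rw [Equiv.swap_apply_of_ne_of_ne hnp hna]
  have hret : (τ ^ i) p = p := by
    have h1 : (τ ^ (i - 1)) p = (σ ^ (i - 1)) p := hwalk _ le_rfl
    have h2 : i = (i - 1) + 1 := by omega
    rw [h2, pow_succ', Equiv.Perm.mul_apply, h1, htapp _, ← Equiv.Perm.mul_apply σ,
      ← pow_succ', ← h2, hspec, Equiv.swap_apply_right]
  intro hc
  obtain ⟨j, hj⟩ := sc_nat.mp hc
  have hj' : (τ ^ (j % i)) p = a := by rw [← pow_mod_fix hret j, hj]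
  have hlt : j % i < i := Nat.mod_lt _ hipos
  have : (σ ^ (j % i)) p = a := by
    rw [← hwalk (j % i) (by omega), hj']
  exact Nat.find_min hP hlt this


section Char
variable {σ : Perm α} {p a : α}

/-- In the join case, a step of `σ` stays in the same `τ`-cycle. -/
lemma sameCycle_tau_apply (h : ¬ σ.SameCycle p a) (x : α) :
    (Equiv.swap p a * σ).SameCycle x (σ x) := by
  set τ := Equiv.swap p a * σ with hτ
  have hpa : p ≠ a := fun hc => h (hc ▸ Equiv.Perm.SameCycle.refl σ p)
  have hscpa : τ.SameCycle p a := sameCycle_swap_mul σ h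
  have hstep : τ.SameCycle x (τ x) := ⟨1, by simp⟩
  have htapp : τ x = Equiv.swap p a (σ x) := rfl
  rcases eq_or_ne (σ x) p with h1 | h1
  · have : τ x = a := by rw [htapp, h1, Equiv.swap_apply_left]
    rw [h1]
    exact (this ▸ hstep).trans hscpa.symm
  rcases eq_or_ne (σ x) a with h2 | h2
  · have : τ x = p := by rw [htapp, h2, Equiv.swap_apply_right]
    rw [h2]
    exact (this ▸ hstep).trans hscpa
  · have : τ x = σ x := by rw [htapp, Equiv.swap_apply_of_ne_of_ne h1 h2]
    exact this ▸ hstep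

lemma sameCycle_of_sameCycle (h : ¬ σ.SameCycle p a) {x y : α} (hxy : σ.SameCycle x y) :
    (Equiv.swap p a * σ).SameCycle x y := by
  obtain ⟨i, hi⟩ := sc_nat.mp hxy
  subst hi
  clear hxy
  induction i with
  | zero => exact Equiv.Perm.SameCycle.refl _ _
  | succ i ih =>
    rw [pow_succ', Equiv.Perm.mul_apply]
    exact ih.trans (sameCycle_tau_apply h _)

/-- Full characterization of cycles after a join. -/
lemma sameCycle_swap_mul_iff (h : ¬ σ.SameCycle p a) {x y : α} :
    (Equiv.swap p a * σ).SameCycle x y ↔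
      (σ.SameCycle x y ∨
        ((σ.SameCycle p x ∨ σ.SameCycle a x) ∧ (σ.SameCycle p y ∨ σ.SameCycle a y))) := by
  set τ := Equiv.swap p a * σ with hτ
  have hpa : p ≠ a := fun hc => h (hc ▸ Equiv.Perm.SameCycle.refl σ p)
  have hscpa : τ.SameCycle p a := sameCycle_swap_mul σ h
  constructor
  · -- forward: τ-steps preserve the relation R
    intro hxy
    obtain ⟨i, hi⟩ := sc_nat.mp hxy
    subst hi
    clear hxy
    induction i with
    | zero => exact Or.inl (Equiv.Perm.SameCycle.refl _ _)
    | succ i ih =>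
      rw [pow_succ', Equiv.Perm.mul_apply]
      set z := (τ ^ i) x with hz
      have hstep : σ.SameCycle z (τ z) ∨
          ((σ.SameCycle p z ∨ σ.SameCycle a z) ∧ (σ.SameCycle p (τ z) ∨ σ.SameCycle a (τ z))) := by
        have htapp : τ z = Equiv.swap p a (σ z) := rfl
        rcases eq_or_ne (σ z) p with h1 | h1
        · have h2 : τ z = a := by rw [htapp, h1, Equiv.swap_apply_left]
          refine Or.inr ⟨Or.inl ?_, Or.inr (h2 ▸ Equiv.Perm.SameCycle.refl _ _)⟩
          exact Equiv.Perm.SameCycle.symm ⟨1, by simpa using h1⟩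
        rcases eq_or_ne (σ z) a with h2 | h2
        · have h3 : τ z = p := by rw [htapp, h2, Equiv.swap_apply_right]
          refine Or.inr ⟨Or.inr ?_, Or.inl (h3 ▸ Equiv.Perm.SameCycle.refl _ _)⟩
          exact Equiv.Perm.SameCycle.symm ⟨1, by simpa using h2⟩
        · have h3 : τ z = σ z := by rw [htapp, Equiv.swap_apply_of_ne_of_ne h1 h2]
          exact Or.inl (h3 ▸ ⟨1, by simp⟩)
      -- combine ih (R x z) with hstep (R z (τ z)) by transitivity of R
      rcases ih with ih | ih
      · rcases hstep with hs | hs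
        · exact Or.inl (ih.trans hs)
        · exact Or.inr ⟨hs.1.elim (fun u => Or.inl (u.trans ih.symm))
            (fun u => Or.inr (u.trans ih.symm)), hs.2⟩
      · rcases hstep with hs | hs
        · refine Or.inr ⟨ih.1, ?_⟩
          exact ih.2.elim (fun u => Or.inl (u.trans hs)) (fun u => Or.inr (u.trans hs))
        · exact Or.inr ⟨ih.1, hs.2⟩
  · rintro (hxy | ⟨hx, hy⟩)
    · exact sameCycle_of_sameCycle h hxy
    · have hx' : τ.SameCycle p x := by
        rcases hx with hx | hx
        · exact sameCycle_of_sameCycle h hx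
        · exact hscpa.trans (sameCycle_of_sameCycle h hx)
      have hy' : τ.SameCycle p y := by
        rcases hy with hy | hy
        · exact sameCycle_of_sameCycle h hy
        · exact hscpa.trans (sameCycle_of_sameCycle h hy)
      exact hx'.symm.trans hy'


end Char

section Orbits
variable (σ : Perm α)

/-- The orbit (cycle) of `x` under `σ`, as a finset. -/
noncomputable def orb (x : α) : Finset α := Finset.univ.filter (σ.SameCycle x)

/-- The set of orbits of `σ`. -/
noncomputable def cycS : Finset (Finset α) := Finset.univ.image (orb σ)

/-- The number of orbits of `σ` (including fixed points). -/
noncomputable def Cn : ℕ := (cycS σ).card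

/-- The product of the orbit sizes of `σ`. -/
noncomputable def Pl : ℚ := ∏ O ∈ cycS σ, (O.card : ℚ)

variable {σ}

lemma mem_orb {x y : α} : y ∈ orb σ x ↔ σ.SameCycle x y := by simp [orb]

lemma self_mem_orb (x : α) : x ∈ orb σ x := mem_orb.mpr (Equiv.Perm.SameCycle.refl _ _)

lemma orb_card_pos (x : α) : 0 < (orb σ x).card := Finset.card_pos.mpr ⟨x, self_mem_orb x⟩

lemma orb_eq_orb {x y : α} (h : σ.SameCycle x y) : orb σ x = orb σ y := by
  ext z
  simp only [mem_orb]
  exact ⟨fun hz => h.symm.trans hz, fun hz => h.trans hz⟩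

lemma orb_eq_iff {x y : α} : orb σ x = orb σ y ↔ σ.SameCycle x y := by
  refine ⟨fun h => ?_, orb_eq_orb⟩
  have := self_mem_orb (σ := σ) y
  rw [← h, mem_orb] at this
  exact this

lemma orb_mem_cycS (x : α) : orb σ x ∈ cycS σ := Finset.mem_image_of_mem _ (Finset.mem_univ x)

lemma orb_of_fixed {x : α} (h : σ x = x) : orb σ x = {x} := by
  ext y
  simp only [mem_orb, Finset.mem_singleton]
  constructor
  · intro hy
    obtain ⟨i, hi⟩ := sc_nat.mp hy
    rw [fix_pow h] at hi
    exact hi.symm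
  · rintro rfl; exact Equiv.Perm.SameCycle.refl _ _

lemma orb_subset_support_insert (x : α) : orb σ x ⊆ insert x σ.support := by
  intro y hy
  rw [mem_orb] at hy
  rcases eq_or_ne y x with h | h
  · simp [h]
  · rcases eq_or_ne (σ y) y with h2 | h2
    · exact absurd (hy.eq_of_right h2) (Ne.symm h)
    · exact Finset.mem_insert_of_mem (Equiv.Perm.mem_support.mpr h2)

lemma filter_orb_eq {O : Finset α} (hO : O ∈ cycS σ) :
    Finset.univ.filter (fun x => orb σ x = O) = O := by
  obtain ⟨x₀, -, rfl⟩ := Finset.mem_image.mp hO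
  ext y
  simp only [Finset.mem_filter, Finset.mem_univ, true_and, mem_orb]
  rw [orb_eq_iff]
  exact ⟨fun h => h.symm, fun h => h.symm⟩

/-- Grouping a sum over `α` by orbits. -/
lemma sum_orb_comp (f : Finset α → ℚ) :
    ∑ x : α, f (orb σ x) = ∑ O ∈ cycS σ, (O.card : ℚ) * f O := by
  rw [Finset.sum_comp (g := orb σ) (f := f)]
  apply Finset.sum_congr rfl
  intro O hO
  rw [filter_orb_eq hO, nsmul_eq_mul]

lemma sum_inv_orb_card : ∑ x : α, ((orb σ x).card : ℚ)⁻¹ = Cn σ := by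
  have hcomp := sum_orb_comp (σ := σ) (fun O : Finset α => ((O.card : ℚ))⁻¹)
  rw [hcomp, Cn, Finset.card_eq_sum_ones (cycS σ), Nat.cast_sum]
  apply Finset.sum_congr rfl
  intro O hO
  obtain ⟨x₀, -, rfl⟩ := Finset.mem_image.mp hO
  rw [mul_inv_cancel₀]
  · simp
  · exact_mod_cast (orb_card_pos x₀).ne'

end Orbits

section JoinSplit
variable {σ : Perm α} {p a : α}

lemma orb_join_inside (h : ¬ σ.SameCycle p a) {x : α}
    (hx : σ.SameCycle p x ∨ σ.SameCycle a x) :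
    orb (Equiv.swap p a * σ) x = orb σ p ∪ orb σ a := by
  ext y
  simp only [mem_orb, Finset.mem_union]
  rw [sameCycle_swap_mul_iff h]
  constructor
  · rintro (hxy | ⟨-, hy⟩)
    · rcases hx with hx | hx
      · exact Or.inl (hx.trans hxy)
      · exact Or.inr (hx.trans hxy)
    · exact hy
  · intro hy
    exact Or.inr ⟨hx, hy⟩

lemma orb_join_outside (h : ¬ σ.SameCycle p a) {x : α}
    (hx : ¬ σ.SameCycle p x) (hx' : ¬ σ.SameCycle a x) :
    orb (Equiv.swap p a * σ) x = orb σ x := by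
  ext y
  simp only [mem_orb]
  rw [sameCycle_swap_mul_iff h]
  constructor
  · rintro (hxy | ⟨hx2, -⟩)
    · exact hxy
    · rcases hx2 with h2 | h2
      · exact absurd h2 hx
      · exact absurd h2 hx'
  · exact Or.inl

lemma orb_disjoint (h : ¬ σ.SameCycle p a) : Disjoint (orb σ p) (orb σ a) := by
  rw [Finset.disjoint_left]
  intro y hy hy'
  exact h ((mem_orb.mp hy).trans (mem_orb.mp hy').symm)

lemma union_not_mem (h : ¬ σ.SameCycle p a) :
    orb σ p ∪ orb σ a ∉ cycS σ := by
  intro hc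
  obtain ⟨x, -, hx⟩ := Finset.mem_image.mp hc
  have hp : p ∈ orb σ x := by rw [hx]; exact Finset.mem_union_left _ (self_mem_orb p)
  have ha : a ∈ orb σ x := by rw [hx]; exact Finset.mem_union_right _ (self_mem_orb a)
  exact h ((mem_orb.mp hp).symm.trans (mem_orb.mp ha))

lemma cycS_join (h : ¬ σ.SameCycle p a) :
    cycS (Equiv.swap p a * σ) =
      insert (orb σ p ∪ orb σ a) ((cycS σ).erase (orb σ p) |>.erase (orb σ a)) := by
  ext O
  simp only [cycS, Finset.mem_insert, Finset.mem_erase, Finset.mem_image, Finset.mem_univ,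
    true_and]
  constructor
  · rintro ⟨x, rfl⟩
    by_cases hx : σ.SameCycle p x ∨ σ.SameCycle a x
    · exact Or.inl (orb_join_inside h hx)
    · push_neg at hx
      rw [orb_join_outside h hx.1 hx.2]
      refine Or.inr ⟨?_, ?_, ⟨x, rfl⟩⟩
      · rw [Ne, orb_eq_iff, sameCycle_comm]; exact hx.2
      · rw [Ne, orb_eq_iff, sameCycle_comm]; exact hx.1
  · rintro (rfl | ⟨hne_a, hne_p, x, rfl⟩)
    · exact ⟨p, orb_join_inside h (Or.inl (Equiv.Perm.SameCycle.refl _ _))⟩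
    · refine ⟨x, orb_join_outside h ?_ ?_⟩
      · rw [Ne, orb_eq_iff, sameCycle_comm] at hne_p
        exact hne_p
      · rw [Ne, orb_eq_iff, sameCycle_comm] at hne_a
        exact hne_a

lemma Cn_join (h : ¬ σ.SameCycle p a) : Cn (Equiv.swap p a * σ) = Cn σ - 1 := by
  have hne : orb σ p ≠ orb σ a := fun hc => h (orb_eq_iff.mp hc)
  have hpm : orb σ p ∈ cycS σ := orb_mem_cycS p
  have ham : orb σ a ∈ (cycS σ).erase (orb σ p) :=
    Finset.mem_erase.mpr ⟨Ne.symm hne, orb_mem_cycS a⟩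
  have hnotmem : orb σ p ∪ orb σ a ∉ ((cycS σ).erase (orb σ p)).erase (orb σ a) :=
    fun hc => union_not_mem h (Finset.mem_of_mem_erase (Finset.mem_of_mem_erase hc))
  rw [Cn, cycS_join h, Finset.card_insert_of_notMem hnotmem,
    Finset.card_erase_of_mem ham, Finset.card_erase_of_mem hpm]
  have h2 : 2 ≤ (cycS σ).card := by
    have := Finset.card_le_card (Finset.insert_subset hpm
      (Finset.singleton_subset_iff.mpr (orb_mem_cycS a)))
    rwa [Finset.card_insert_of_notMem (by simpa using hne), Finset.card_singleton] at this
  rw [Cn]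
  omega

lemma Pl_join (h : ¬ σ.SameCycle p a) :
    Pl (Equiv.swap p a * σ) * ((orb σ p).card : ℚ) * ((orb σ a).card : ℚ) =
      Pl σ * (((orb σ p).card : ℚ) + ((orb σ a).card : ℚ)) := by
  have hne : orb σ p ≠ orb σ a := fun hc => h (orb_eq_iff.mp hc)
  have hpm : orb σ p ∈ cycS σ := orb_mem_cycS p
  have ham : orb σ a ∈ (cycS σ).erase (orb σ p) :=
    Finset.mem_erase.mpr ⟨Ne.symm hne, orb_mem_cycS a⟩
  have hnotmem : orb σ p ∪ orb σ a ∉ ((cycS σ).erase (orb σ p)).erase (orb σ a) :=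
    fun hc => union_not_mem h (Finset.mem_of_mem_erase (Finset.mem_of_mem_erase hc))
  have hcard : ((orb σ p ∪ orb σ a).card : ℚ) = ((orb σ p).card : ℚ) + ((orb σ a).card : ℚ) := by
    rw [Finset.card_union_of_disjoint (orb_disjoint h)]; push_cast; ring
  rw [Pl, cycS_join h, Finset.prod_insert hnotmem, hcard]
  have e1 := Finset.prod_erase_mul ((cycS σ).erase (orb σ p))
    (fun O : Finset α => ((O.card : ℚ))) ham
  have e2 := Finset.prod_erase_mul (cycS σ) (fun O : Finset α => ((O.card : ℚ))) hpm
  rw [Pl, ← e2, ← e1]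
  ring

end JoinSplit

section Counting
variable {p : α}

/-- Star factorization sequences: entries in `s`, covering `s`, with product `σ`. -/
noncomputable def starSeqs (r : ℕ) (p : α) (s : Finset α) (σ : Perm α) :
    Finset (Fin r → α) :=
  Finset.univ.filter (fun a => (∀ t, a t ∈ s) ∧ (∀ x ∈ s, ∃ t, a t = x) ∧
    (List.ofFn (fun t => Equiv.swap p (a t))).prod = σ)

lemma mem_starSeqs {r : ℕ} {s : Finset α} {σ : Perm α} {a : Fin r → α} :
    a ∈ starSeqs r p s σ ↔ (∀ t, a t ∈ s) ∧ (∀ x ∈ s, ∃ t, a t = x) ∧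
      (List.ofFn (fun t => Equiv.swap p (a t))).prod = σ := by
  simp [starSeqs]

lemma prod_fix {r : ℕ} (a : Fin r → α) {x : α} (hx : x ≠ p) (hx2 : ∀ t, a t ≠ x) :
    (List.ofFn (fun t => Equiv.swap p (a t))).prod x = x := by
  induction r with
  | zero => simp
  | succ r ih =>
    rw [List.ofFn_succ, List.prod_cons, Equiv.Perm.mul_apply,
      ih (fun t => a t.succ) (fun t => hx2 t.succ)]
    exact Equiv.swap_apply_of_ne_of_ne hx (Ne.symm (hx2 0))

lemma support_prod {r : ℕ} {s : Finset α} (a : Fin r → α) (h : ∀ t, a t ∈ s) :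
    ((List.ofFn fun t => Equiv.swap p (a t)).prod).support ⊆ insert p s := by
  intro x hx
  by_contra hc
  simp only [Finset.mem_insert, not_or] at hc
  apply Equiv.Perm.mem_support.mp hx
  exact prod_fix a hc.1 (fun t hct => hc.2 (hct ▸ h t))

lemma starSeqs_empty_of_support {r : ℕ} {s : Finset α} {σ : Perm α}
    (h : ¬ σ.support ⊆ insert p s) : starSeqs r p s σ = ∅ := by
  rw [Finset.eq_empty_iff_forall_notMem]
  intro a ha
  obtain ⟨h1, -, h3⟩ := mem_starSeqs.mp ha
  exact h (h3 ▸ support_prod a h1)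

lemma starSeqs_zero {s : Finset α} {σ : Perm α} :
    (starSeqs 0 p s σ).card = if s = ∅ ∧ σ = 1 then 1 else 0 := by
  split_ifs with h
  · obtain ⟨rfl, rfl⟩ := h
    rw [show starSeqs 0 p ∅ 1 = {(finZeroElim : Fin 0 → α)} from ?_]
    · rw [Finset.card_singleton]
    · ext a
      simp only [mem_starSeqs, Finset.mem_singleton]
      constructor
      · intro; ext t; exact absurd t.2 (by omega)
      · intro h
        refine ⟨fun t => absurd t.2 (by omega), fun x hx => absurd hx (by simp), by simp⟩
  · rw [Finset.card_eq_zero, Finset.eq_empty_iff_forall_notMem]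
    intro a ha
    obtain ⟨h1, h2, h3⟩ := mem_starSeqs.mp ha
    apply h
    constructor
    · rw [Finset.eq_empty_iff_forall_notMem]
      intro x hx
      obtain ⟨t, -⟩ := h2 x hx
      exact absurd t.2 (by omega)
    · rw [← h3]; simp

lemma starSeqs_succ (r : ℕ) (s : Finset α) (σ : Perm α) (hp : p ∉ s) :
    (starSeqs (r + 1) p s σ).card = ∑ a ∈ s,
      ((starSeqs r p s (Equiv.swap p a * σ)).card +
       (starSeqs r p (s.erase a) (Equiv.swap p a * σ)).card) := by
  have hdisj2 : ∀ a ∈ s, Disjoint (starSeqs r p s (Equiv.swap p a * σ))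
      (starSeqs r p (s.erase a) (Equiv.swap p a * σ)) := by
    intro a ha
    rw [Finset.disjoint_left]
    intro c hc1 hc2
    obtain ⟨-, h2, -⟩ := mem_starSeqs.mp hc1
    obtain ⟨h1', -, -⟩ := mem_starSeqs.mp hc2
    obtain ⟨t, ht⟩ := h2 a ha
    exact absurd (ht ▸ h1' t) (by simp)
  have key : starSeqs (r + 1) p s σ = s.biUnion (fun a =>
      ((starSeqs r p s (Equiv.swap p a * σ)) ∪
       (starSeqs r p (s.erase a) (Equiv.swap p a * σ))).image (fun c => Fin.cons a c)) := by
    ext b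
    simp only [Finset.mem_biUnion, Finset.mem_image, Finset.mem_union]
    constructor
    · intro hb
      obtain ⟨h1, h2, h3⟩ := mem_starSeqs.mp hb
      refine ⟨b 0, h1 0, Fin.tail b, ?_, Fin.cons_self_tail b⟩
      have hprod : (List.ofFn (fun t : Fin r => Equiv.swap p (Fin.tail b t))).prod
          = Equiv.swap p (b 0) * σ := by
        rw [← h3, List.ofFn_succ, List.prod_cons, ← mul_assoc, Equiv.swap_mul_self, one_mul]
        rfl
      have htent : ∀ t, Fin.tail b t ∈ s := fun t => h1 t.succ
      have hcov' : ∀ x ∈ s.erase (b 0), ∃ t, Fin.tail b t = x := by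
        intro x hx
        obtain ⟨hxne, hxs⟩ := Finset.mem_erase.mp hx
        obtain ⟨t, ht⟩ := h2 x hxs
        have ht0 : t ≠ 0 := fun hc => hxne (by rw [← ht, hc])
        obtain ⟨t', rfl⟩ := Fin.eq_succ_of_ne_zero ht0
        exact ⟨t', ht⟩
      by_cases hmem : ∃ t, Fin.tail b t = b 0
      · left
        refine mem_starSeqs.mpr ⟨htent, ?_, hprod⟩
        intro x hx
        rcases eq_or_ne x (b 0) with rfl | hne
        · exact hmem
        · exact hcov' x (Finset.mem_erase.mpr ⟨hne, hx⟩)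
      · right
        refine mem_starSeqs.mpr ⟨?_, hcov', hprod⟩
        intro t
        refine Finset.mem_erase.mpr ⟨fun hc => hmem ⟨t, hc⟩, htent t⟩
    · rintro ⟨a, ha, c, hc, rfl⟩
      have hct : ∀ t, c t ∈ s := by
        rcases hc with hc | hc
        · exact (mem_starSeqs.mp hc).1
        · exact fun t => Finset.mem_of_mem_erase ((mem_starSeqs.mp hc).1 t)
      have hcov : ∀ x ∈ s.erase a, ∃ t, c t = x := by
        rcases hc with hc | hc
        · exact fun x hx => (mem_starSeqs.mp hc).2.1 x (Finset.mem_of_mem_erase hx)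
        · exact (mem_starSeqs.mp hc).2.1
      have hprod : (List.ofFn (fun t : Fin r => Equiv.swap p (c t))).prod
          = Equiv.swap p a * σ := by
        rcases hc with hc | hc
        · exact (mem_starSeqs.mp hc).2.2
        · exact (mem_starSeqs.mp hc).2.2
      refine mem_starSeqs.mpr ⟨?_, ?_, ?_⟩
      · intro t
        refine Fin.cases ?_ ?_ t
        · rwa [Fin.cons_zero]
        · intro t'; rw [Fin.cons_succ]; exact hct t'
      · intro x hx
        rcases eq_or_ne x a with rfl | hne
        · exact ⟨0, by simp⟩
        · obtain ⟨t', ht'⟩ := hcov x (Finset.mem_erase.mpr ⟨hne, hx⟩)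
          exact ⟨t'.succ, by rwa [Fin.cons_succ]⟩
      · rw [List.ofFn_succ, List.prod_cons]
        have h0 : (Fin.cons a c : Fin (r + 1) → α) 0 = a := by simp
        have hsucc : ∀ t : Fin r, (Fin.cons a c : Fin (r + 1) → α) t.succ = c t :=
          fun t => by simp
        simp only [h0, hsucc, hprod, ← mul_assoc, Equiv.swap_mul_self, one_mul]
  have hinj : ∀ a : α, Function.Injective (fun c : Fin r → α => (Fin.cons a c : Fin (r + 1) → α)) := by
    intro a c c' h
    have := congrArg Fin.tail h
    simpa [Fin.tail_cons] using this
  rw [key, Finset.card_biUnion]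
  · apply Finset.sum_congr rfl
    intro a ha
    rw [Finset.card_image_of_injective _ (hinj a),
      Finset.card_union_of_disjoint (hdisj2 a ha)]
  · intro a ha a' ha' hne
    rw [Function.onFun, Finset.disjoint_left]
    rintro b hb hb'
    obtain ⟨c, -, rfl⟩ := Finset.mem_image.mp hb
    obtain ⟨c', -, hc'⟩ := Finset.mem_image.mp hb'
    apply hne
    have := congrArg (fun f => f 0) hc'
    simpa using this.symm

end Counting

section Helpers
variable {σ : Perm α} {p a : α} {s : Finset α}

lemma sameCycle_of_apply_eq (h : σ a = p) : σ.SameCycle p a :=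
  (Equiv.Perm.SameCycle.symm ⟨1, by simpa using h⟩)

lemma Cn_join' (h : ¬ σ.SameCycle p a) : Cn (Equiv.swap p a * σ) + 1 = Cn σ := by
  have hne : orb σ p ≠ orb σ a := fun hc => h (orb_eq_iff.mp hc)
  have h2 : 2 ≤ Cn σ := by
    have := Finset.card_le_card (Finset.insert_subset (orb_mem_cycS p)
      (Finset.singleton_subset_iff.mpr (orb_mem_cycS (σ := σ) a)))
    rwa [Finset.card_insert_of_notMem (by simpa using hne), Finset.card_singleton] at this
  have := Cn_join h
  omega

lemma Cn_split (hpa : p ≠ a) (h : σ.SameCycle p a) :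
    Cn (Equiv.swap p a * σ) = Cn σ + 1 := by
  have ht := not_sameCycle_swap_mul σ hpa h
  have := Cn_join' (σ := Equiv.swap p a * σ) ht
  rw [swap_swap_mul] at this
  omega

lemma tau_fix_of_apply_eq (hap : σ a = p) : (Equiv.swap p a * σ) a = a := by
  rw [tau_apply, hap, Equiv.swap_apply_left]

lemma orb_p_split (hpa : p ≠ a) (hap : σ a = p) :
    orb σ p = orb (Equiv.swap p a * σ) p ∪ {a} ∧
    Disjoint (orb (Equiv.swap p a * σ) p) ({a} : Finset α) := by
  set τ := Equiv.swap p a * σ with hτ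
  have ht : ¬ τ.SameCycle p a :=
    not_sameCycle_swap_mul σ hpa (sameCycle_of_apply_eq hap)
  have hfix : τ a = a := tau_fix_of_apply_eq hap
  have h1 : orb (Equiv.swap p a * τ) p = orb τ p ∪ orb τ a :=
    orb_join_inside ht (Or.inl (Equiv.Perm.SameCycle.refl _ _))
  rw [swap_swap_mul] at h1
  rw [orb_of_fixed hfix] at h1
  refine ⟨h1, ?_⟩
  have := orb_disjoint ht
  rwa [orb_of_fixed hfix] at this

lemma split_card (hpa : p ≠ a) (hap : σ a = p) :
    (orb σ p).card = (orb (Equiv.swap p a * σ) p).card + 1 := by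
  obtain ⟨h1, h2⟩ := orb_p_split hpa hap
  rw [h1, Finset.card_union_of_disjoint h2, Finset.card_singleton]

lemma Pl_split (hpa : p ≠ a) (hap : σ a = p) :
    Pl (Equiv.swap p a * σ) * ((orb σ p).card : ℚ) =
      Pl σ * (((orb σ p).card : ℚ) - 1) := by
  set τ := Equiv.swap p a * σ with hτ
  have ht : ¬ τ.SameCycle p a :=
    not_sameCycle_swap_mul σ hpa (sameCycle_of_apply_eq hap)
  have hfix : τ a = a := tau_fix_of_apply_eq hap
  have hP := Pl_join (σ := τ) ht
  rw [swap_swap_mul] at hP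
  rw [orb_of_fixed hfix, Finset.card_singleton] at hP
  have hc := split_card hpa hap
  have hc' : ((orb σ p).card : ℚ) = ((orb τ p).card : ℚ) + 1 := by exact_mod_cast hc
  rw [hc']
  push_cast at hP ⊢
  linarith [hP]

lemma support_one_of_subset (h : σ.support ⊆ {p}) : σ = 1 := by
  by_contra hc
  have h1 : σ.support ≠ ∅ := by
    rw [Ne, Equiv.Perm.support_eq_empty_iff]
    exact hc
  have h2 : σ.support = {p} := Finset.eq_of_subset_of_card_le h (by
    rw [Finset.card_singleton]
    exact Finset.card_pos.mpr (Finset.nonempty_iff_ne_empty.mpr h1))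
  have hp : σ p ≠ p := Equiv.Perm.mem_support.mp (h2 ▸ Finset.mem_singleton_self p)
  have : σ p ∈ σ.support := Equiv.Perm.apply_mem_support.mpr (h2 ▸ Finset.mem_singleton_self p)
  rw [h2, Finset.mem_singleton] at this
  exact hp this

lemma Cn_one : Cn (1 : Perm α) = Fintype.card α := by
  have h : ∀ x : α, orb (1 : Perm α) x = {x} := fun x => orb_of_fixed rfl
  rw [Cn, cycS]
  rw [Finset.card_image_of_injective]
  · exact Finset.card_univ
  · intro x y hxy
    rw [h, h] at hxy
    exact Finset.singleton_injective hxy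

lemma Pl_one : Pl (1 : Perm α) = 1 := by
  rw [Pl]
  apply Finset.prod_eq_one
  intro O hO
  obtain ⟨x, -, rfl⟩ := Finset.mem_image.mp hO
  rw [orb_of_fixed rfl, Finset.card_singleton, Nat.cast_one]

lemma card_fixed_le_Cn :
    (Finset.univ.filter fun x => σ x = x).card ≤ Cn σ := by
  rw [Cn, cycS]
  calc (Finset.univ.filter fun x => σ x = x).card
      = ((Finset.univ.filter fun x => σ x = x).image (orb σ)).card := by
        rw [Finset.card_image_of_injOn]
        intro x hx y hy hxy
        simp only [Finset.mem_coe, Finset.mem_filter] at hx hy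
        rw [orb_of_fixed hx.2, orb_of_fixed hy.2] at hxy
        exact Finset.singleton_injective hxy
    _ ≤ _ := Finset.card_le_card (Finset.image_subset_image (Finset.subset_univ _))

lemma Cn_lower (hp : p ∉ s) (hsupp : σ.support ⊆ insert p s) :
    Fintype.card α ≤ Cn σ + s.card := by
  have hfix : ∀ x, x ∉ insert p s → σ x = x := by
    intro x hx
    by_contra hc
    exact hx (hsupp (Equiv.Perm.mem_support.mpr hc))
  by_cases hpp : σ p = p
  · have hsub : Finset.univ \ s ⊆ Finset.univ.filter fun x => σ x = x := by
      intro x hx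
      rw [Finset.mem_sdiff] at hx
      rcases eq_or_ne x p with rfl | hne
      · exact Finset.mem_filter.mpr ⟨Finset.mem_univ _, hpp⟩
      · exact Finset.mem_filter.mpr ⟨Finset.mem_univ _,
          hfix x (fun hc => (Finset.mem_insert.mp hc).elim hne (fun h => hx.2 h))⟩
    have h1 := Finset.card_le_card hsub
    have h2 := card_fixed_le_Cn (σ := σ)
    have h3 : (Finset.univ \ s).card = Fintype.card α - s.card := by
      rw [Finset.card_sdiff_of_subset (Finset.subset_univ s), Finset.card_univ]
    have h4 : s.card ≤ Fintype.card α := by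
      rw [← Finset.card_univ]; exact Finset.card_le_card (Finset.subset_univ s)
    omega
  · -- the orbit of p is not a singleton-class of a fixed point
    have hsub : Finset.univ \ insert p s ⊆ Finset.univ.filter fun x => σ x = x := by
      intro x hx
      rw [Finset.mem_sdiff] at hx
      exact Finset.mem_filter.mpr ⟨Finset.mem_univ _, hfix x hx.2⟩
    have hOq : orb σ p ∉ (Finset.univ.filter fun x => σ x = x).image (orb σ) := by
      intro hc
      obtain ⟨x, hx, hx2⟩ := Finset.mem_image.mp hc
      rw [Finset.mem_filter] at hx
      rw [orb_of_fixed hx.2] at hx2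
      have := self_mem_orb (σ := σ) p
      rw [← hx2, Finset.mem_singleton] at this
      subst this
      exact hpp hx.2
    have hsubc : insert (orb σ p) ((Finset.univ.filter fun x => σ x = x).image (orb σ)) ⊆
        cycS σ := by
      apply Finset.insert_subset (orb_mem_cycS p)
      exact fun O hO => by
        obtain ⟨x, -, rfl⟩ := Finset.mem_image.mp hO
        exact orb_mem_cycS x
    have h1 := Finset.card_le_card hsubc
    rw [Finset.card_insert_of_notMem hOq] at h1
    have h2 : ((Finset.univ.filter fun x => σ x = x).image (orb σ)).card
        = (Finset.univ.filter fun x => σ x = x).card := by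
      rw [Finset.card_image_of_injOn]
      intro x hx y hy hxy
      simp only [Finset.mem_coe, Finset.mem_filter] at hx hy
      rw [orb_of_fixed hx.2, orb_of_fixed hy.2] at hxy
      exact Finset.singleton_injective hxy
    have h3 := Finset.card_le_card hsub
    have h4 : (Finset.univ \ insert p s).card = Fintype.card α - (insert p s).card := by
      rw [Finset.card_sdiff_of_subset (Finset.subset_univ _), Finset.card_univ]
    have h5 : (insert p s).card = s.card + 1 := by
      rw [Finset.card_insert_of_notMem hp]
    have h6 : (insert p s).card ≤ Fintype.card α := by
      rw [← Finset.card_univ]; exact Finset.card_le_card (Finset.subset_univ _)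
    rw [Cn]
    omega

lemma orb_subset_G (hsupp : σ.support ⊆ insert p s) (x : α) (hx : x ∈ insert p s) :
    orb σ x ⊆ insert p s := by
  intro y hy
  have := orb_subset_support_insert (σ := σ) x hy
  rcases Finset.mem_insert.mp this with rfl | h
  · exact hx
  · exact hsupp h

end Helpers

section Sums
variable {σ : Perm α} {p : α} {s : Finset α}

lemma sum_univ_three_split (hp : p ∉ s) (hsupp : σ.support ⊆ insert p s) (f : α → ℚ) :
    ∑ x : α, f x = (∑ x ∈ s \ orb σ p, f x) + (∑ x ∈ orb σ p, f x) +
      ∑ x ∈ Finset.univ \ insert p s, f x := by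
  have horb : orb σ p ⊆ insert p s := orb_subset_G hsupp p (Finset.mem_insert_self p s)
  have h1 : ∑ x ∈ insert p s, f x = (∑ x ∈ insert p s \ orb σ p, f x) +
      ∑ x ∈ orb σ p, f x := (Finset.sum_sdiff horb).symm
  have h2 : ∑ x : α, f x = (∑ x ∈ Finset.univ \ insert p s, f x) +
      ∑ x ∈ insert p s, f x := (Finset.sum_sdiff (Finset.subset_univ _)).symm
  have h3 : insert p s \ orb σ p = s \ orb σ p := by
    ext x
    simp only [Finset.mem_sdiff, Finset.mem_insert]
    constructor
    · rintro ⟨rfl | hx, hno⟩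
      · exact absurd (self_mem_orb x) hno
      · exact ⟨hx, hno⟩
    · rintro ⟨hx, hno⟩
      exact ⟨Or.inr hx, hno⟩
  rw [h2, h1, h3]
  ring

lemma sum_inv_outside (hp : p ∉ s) (hsupp : σ.support ⊆ insert p s) :
    ∑ x ∈ Finset.univ \ insert p s, ((orb σ x).card : ℚ)⁻¹ =
      (Fintype.card α : ℚ) - (s.card : ℚ) - 1 := by
  have hfix : ∀ x ∈ Finset.univ \ insert p s, ((orb σ x).card : ℚ)⁻¹ = 1 := by
    intro x hx
    rw [Finset.mem_sdiff] at hx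
    have : σ x = x := by
      by_contra hc
      exact hx.2 (hsupp (Equiv.Perm.mem_support.mpr hc))
    rw [orb_of_fixed this, Finset.card_singleton, Nat.cast_one, inv_one]
  rw [Finset.sum_congr rfl hfix, Finset.sum_const, nsmul_eq_mul, mul_one,
    Finset.card_sdiff_of_subset (Finset.subset_univ _), Finset.card_univ,
    Finset.card_insert_of_notMem hp]
  have : s.card + 1 ≤ Fintype.card α := by
    rw [← Finset.card_insert_of_notMem hp, ← Finset.card_univ]
    exact Finset.card_le_card (Finset.subset_univ _)
  push_cast [Nat.cast_sub this]
  ring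

lemma sum_inv_orbp : ∑ x ∈ orb σ p, ((orb σ x).card : ℚ)⁻¹ = 1 := by
  have h : ∀ x ∈ orb σ p, ((orb σ x).card : ℚ)⁻¹ = ((orb σ p).card : ℚ)⁻¹ := by
    intro x hx
    rw [orb_eq_orb (mem_orb.mp hx)]
  rw [Finset.sum_congr rfl h, Finset.sum_const, nsmul_eq_mul, mul_inv_cancel₀]
  exact_mod_cast (orb_card_pos (σ := σ) p).ne'

lemma sum_inv_s1 (hp : p ∉ s) (hsupp : σ.support ⊆ insert p s) :
    ∑ a ∈ s \ orb σ p, ((orb σ a).card : ℚ)⁻¹ =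
      (Cn σ : ℚ) - (Fintype.card α : ℚ) + (s.card : ℚ) := by
  have h := sum_univ_three_split hp hsupp (fun x => ((orb σ x).card : ℚ)⁻¹)
  rw [sum_inv_orb_card, sum_inv_orbp, sum_inv_outside hp hsupp] at h
  linarith

lemma card_s1 (hp : p ∉ s) (hsupp : σ.support ⊆ insert p s) :
    ((s \ orb σ p).card : ℚ) = (s.card : ℚ) + 1 - ((orb σ p).card : ℚ) := by
  have horb : orb σ p ⊆ insert p s := orb_subset_G hsupp p (Finset.mem_insert_self p s)
  have h3 : insert p s \ orb σ p = s \ orb σ p := by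
    ext x
    simp only [Finset.mem_sdiff, Finset.mem_insert]
    constructor
    · rintro ⟨rfl | hx, hno⟩
      · exact absurd (self_mem_orb x) hno
      · exact ⟨hx, hno⟩
    · rintro ⟨hx, hno⟩
      exact ⟨Or.inr hx, hno⟩
  have h4 : (insert p s \ orb σ p).card = (insert p s).card - (orb σ p).card :=
    Finset.card_sdiff_of_subset horb
  have h5 : (orb σ p).card ≤ (insert p s).card := Finset.card_le_card horb
  rw [← h3, h4]
  rw [Finset.card_insert_of_notMem hp] at h5 ⊢
  push_cast [Nat.cast_sub h5]
  ring

lemma filter_preim_p (hp : p ∉ s) (hsupp : σ.support ⊆ insert p s) :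
    s.filter (fun a => σ a = p) = if σ p = p then ∅ else {σ⁻¹ p} := by
  split_ifs with hpp
  · rw [Finset.eq_empty_iff_forall_notMem]
    intro a ha
    rw [Finset.mem_filter] at ha
    have : a = p := by
      apply σ.injective
      rw [ha.2, hpp]
    exact hp (this ▸ ha.1)
  · ext a
    simp only [Finset.mem_filter, Finset.mem_singleton]
    constructor
    · rintro ⟨-, h⟩
      rw [← h, Equiv.Perm.eq_inv_iff_eq]
    · rintro rfl
      have h2 : σ (σ⁻¹ p) = p := Equiv.apply_symm_apply σ p
      refine ⟨?_, h2⟩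
      have hmem : σ⁻¹ p ∈ σ.support := by
        rw [Equiv.Perm.mem_support]
        intro hc
        apply hpp
        conv_lhs => rw [← h2, hc, h2]
      have := hsupp hmem
      rcases Finset.mem_insert.mp this with h | h
      · exfalso
        apply hpp
        calc σ p = σ (σ⁻¹ p) := by rw [h]
          _ = p := h2
      · exact h
end Sums

theorem main (p : α) : ∀ r : ℕ, ∀ (s : Finset α) (σ : Perm α), p ∉ s →
    σ.support ⊆ insert p s →
    ((starSeqs r p s σ).card ≠ 0 → 2 * s.card + Cn σ ≤ r + Fintype.card α) ∧
    (r + Fintype.card α = 2 * s.card + Cn σ →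
      ((starSeqs r p s σ).card : ℚ) * (((s.card + 1).factorial : ℕ) : ℚ) =
        ((r.factorial : ℕ) : ℚ) * Pl σ) := by
  intro r
  induction r with
  | zero =>
    intro s σ hp hsupp
    constructor
    · intro hne
      rw [starSeqs_zero] at hne
      split_ifs at hne with h
      · obtain ⟨rfl, rfl⟩ := h
        rw [Cn_one]
        simp
      · exact absurd rfl hne
    · intro heq
      have hlow := Cn_lower hp hsupp
      have hs0 : s.card = 0 := by omega
      have hs : s = ∅ := Finset.card_eq_zero.mp hs0
      subst hs
      have hone : σ = 1 := support_one_of_subset (by simpa using hsupp)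
      subst hone
      rw [starSeqs_zero, if_pos ⟨rfl, rfl⟩, Pl_one]
      simp
  | succ r ih =>
    intro s σ hp hsupp
    have hstep : ∀ a ∈ s, a ≠ p ∧ (Equiv.swap p a * σ).support ⊆ insert p s := by
      intro a ha
      have hap : a ≠ p := fun hc => hp (hc ▸ ha)
      refine ⟨hap, ?_⟩
      intro x hx
      have hx2 := Equiv.Perm.support_mul_le (Equiv.swap p a) σ hx
      rcases Finset.mem_union.mp hx2 with h | h
      · rw [Equiv.Perm.support_swap (Ne.symm hap)] at h
        rcases Finset.mem_insert.mp h with rfl | h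
        · exact Finset.mem_insert_self _ _
        · rw [Finset.mem_singleton] at h
          exact Finset.mem_insert_of_mem (h ▸ ha)
      · exact hsupp h
    have hT2zero : ∀ a ∈ s, σ a ≠ p →
        (starSeqs r p (s.erase a) (Equiv.swap p a * σ)).card = 0 := by
      intro a ha h1
      have hap : a ≠ p := fun hc => hp (hc ▸ ha)
      rw [starSeqs_empty_of_support, Finset.card_empty]
      intro hc
      have hfa : (Equiv.swap p a * σ) a ≠ a := by
        intro hfix
        apply h1
        apply (Equiv.swap p a).injective
        rw [← tau_apply σ p a a, hfix, Equiv.swap_apply_left]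
      have hmem := hc (Equiv.Perm.mem_support.mpr hfa)
      rcases Finset.mem_insert.mp hmem with h | h
      · exact hap h
      · exact (Finset.notMem_erase a s) h
    constructor
    · -- lower bound
      intro hne
      rw [starSeqs_succ r s σ hp] at hne
      obtain ⟨a, ha, hterm⟩ := Finset.exists_ne_zero_of_sum_ne_zero hne
      obtain ⟨hap, hsupp'⟩ := hstep a ha
      have hpa : p ≠ a := Ne.symm hap
      have hcases : (starSeqs r p s (Equiv.swap p a * σ)).card ≠ 0 ∨
          (starSeqs r p (s.erase a) (Equiv.swap p a * σ)).card ≠ 0 := by omega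
      rcases hcases with h1 | h2
      · have hb := (ih s _ hp hsupp').1 h1
        by_cases hsc : σ.SameCycle p a
        · have := Cn_split hpa hsc
          omega
        · have := Cn_join' hsc
          omega
      · have hss : (Equiv.swap p a * σ).support ⊆ insert p (s.erase a) := by
          by_contra hc
          rw [starSeqs_empty_of_support hc, Finset.card_empty] at h2
          exact h2 rfl
        have hap2 : σ a = p := by
          by_contra hc
          rw [hT2zero a ha hc] at h2
          exact h2 rfl
        have hsc : σ.SameCycle p a := sameCycle_of_apply_eq hap2
        have hCn : Cn (Equiv.swap p a * σ) = Cn σ + 1 := Cn_split hpa hsc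
        have hperase : p ∉ s.erase a := fun hc => hp (Finset.mem_of_mem_erase hc)
        have hb := (ih (s.erase a) _ hperase hss).1 h2
        have hscard : (s.erase a).card = s.card - 1 := Finset.card_erase_of_mem ha
        have hpos : 1 ≤ s.card := Finset.card_pos.mpr ⟨a, ha⟩
        omega
    · -- exact count
      intro heq
      rw [starSeqs_succ r s σ hp]
      have hL0pos : (0:ℚ) < ((orb σ p).card : ℚ) := by
        exact_mod_cast orb_card_pos (σ := σ) p
      have hL0ne : ((orb σ p).card : ℚ) ≠ 0 := hL0pos.ne'
      have hfacSne : (((s.card + 1).factorial : ℕ) : ℚ) ≠ 0 := by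
        exact_mod_cast (Nat.factorial_pos _).ne'
      have hfacsne : ((s.card.factorial : ℕ) : ℚ) ≠ 0 := by
        exact_mod_cast (Nat.factorial_pos _).ne'
      have key : ∀ a ∈ s, ((starSeqs r p s (Equiv.swap p a * σ)).card : ℚ) +
          ((starSeqs r p (s.erase a) (Equiv.swap p a * σ)).card : ℚ) =
          ((r.factorial : ℕ) : ℚ) / (((s.card + 1).factorial : ℕ) : ℚ) * Pl σ *
            (if σ a = p then ((s.card : ℚ) + 1) * (((orb σ p).card : ℚ) - 1) /
                ((orb σ p).card : ℚ)
             else if σ.SameCycle p a then 0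
             else (((orb σ a).card : ℚ)⁻¹ + ((orb σ p).card : ℚ)⁻¹)) := by
        intro a ha
        obtain ⟨hap, hsupp'⟩ := hstep a ha
        have hpa : p ≠ a := Ne.symm hap
        by_cases h1 : σ a = p
        · rw [if_pos h1]
          have hsc : σ.SameCycle p a := sameCycle_of_apply_eq h1
          have hCn : Cn (Equiv.swap p a * σ) = Cn σ + 1 := Cn_split hpa hsc
          have hT1 : (starSeqs r p s (Equiv.swap p a * σ)).card = 0 := by
            by_contra hc
            have := (ih s _ hp hsupp').1 hc
            omega
          have hperase : p ∉ s.erase a := fun hc => hp (Finset.mem_of_mem_erase hc)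
          have hss : (Equiv.swap p a * σ).support ⊆ insert p (s.erase a) := by
            intro x hx
            have hxx := hsupp' hx
            rcases Finset.mem_insert.mp hxx with h | h
            · exact Finset.mem_insert.mpr (Or.inl h)
            · rcases eq_or_ne x a with rfl | hne
              · exact absurd (tau_fix_of_apply_eq h1) (Equiv.Perm.mem_support.mp hx)
              · exact Finset.mem_insert.mpr (Or.inr (Finset.mem_erase.mpr ⟨hne, h⟩))
          have hscard : (s.erase a).card = s.card - 1 := Finset.card_erase_of_mem ha
          have hpos : 1 ≤ s.card := Finset.card_pos.mpr ⟨a, ha⟩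
          have hIH := (ih (s.erase a) _ hperase hss).2 (by omega)
          have hfac : (s.erase a).card + 1 = s.card := by omega
          rw [hfac] at hIH
          have hPl := Pl_split hpa h1
          rw [hT1, Nat.cast_zero, zero_add]
          have e1 : ((starSeqs r p (s.erase a) (Equiv.swap p a * σ)).card : ℚ) =
              ((r.factorial : ℕ) : ℚ) * Pl (Equiv.swap p a * σ) /
                ((s.card.factorial : ℕ) : ℚ) :=
            eq_div_of_mul_eq hfacsne hIH
          have e2 : Pl (Equiv.swap p a * σ) =
              Pl σ * (((orb σ p).card : ℚ) - 1) / ((orb σ p).card : ℚ) :=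
            eq_div_of_mul_eq hL0ne hPl
          have hfacS : (((s.card + 1).factorial : ℕ) : ℚ) =
              ((s.card : ℚ) + 1) * ((s.card.factorial : ℕ) : ℚ) := by
            rw [Nat.factorial_succ]; push_cast; ring
          rw [e1, e2, hfacS]
          field_simp
        · rw [if_neg h1]
          have hT2 : (starSeqs r p (s.erase a) (Equiv.swap p a * σ)).card = 0 :=
            hT2zero a ha h1
          by_cases h2 : σ.SameCycle p a
          · rw [if_pos h2]
            have hCn : Cn (Equiv.swap p a * σ) = Cn σ + 1 := Cn_split hpa h2
            have hT1 : (starSeqs r p s (Equiv.swap p a * σ)).card = 0 := by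
              by_contra hc
              have := (ih s _ hp hsupp').1 hc
              omega
            rw [hT1, hT2]
            simp
          · rw [if_neg h2]
            have hCn : Cn (Equiv.swap p a * σ) + 1 = Cn σ := Cn_join' h2
            have hIH := (ih s _ hp hsupp').2 (by omega)
            have hPl := Pl_join h2
            have hLapos : (0:ℚ) < ((orb σ a).card : ℚ) := by
              exact_mod_cast orb_card_pos (σ := σ) a
            have hLane : ((orb σ a).card : ℚ) ≠ 0 := hLapos.ne'
            rw [hT2, Nat.cast_zero, add_zero]
            have e1 : ((starSeqs r p s (Equiv.swap p a * σ)).card : ℚ) =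
                ((r.factorial : ℕ) : ℚ) * Pl (Equiv.swap p a * σ) /
                  (((s.card + 1).factorial : ℕ) : ℚ) :=
              eq_div_of_mul_eq hfacSne hIH
            have e2 : Pl (Equiv.swap p a * σ) =
                Pl σ * (((orb σ p).card : ℚ) + ((orb σ a).card : ℚ)) /
                  (((orb σ p).card : ℚ) * ((orb σ a).card : ℚ)) := by
              apply eq_div_of_mul_eq (mul_ne_zero hL0ne hLane)
              rw [← mul_assoc]
              exact hPl
            rw [e1, e2]
            field_simp
      rw [Nat.cast_sum]
      push_cast
      rw [Finset.sum_congr rfl key, ← Finset.mul_sum]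
      have hw : (∑ a ∈ s,
          (if σ a = p then ((s.card : ℚ) + 1) * (((orb σ p).card : ℚ) - 1) /
              ((orb σ p).card : ℚ)
           else if σ.SameCycle p a then 0
           else (((orb σ a).card : ℚ)⁻¹ + ((orb σ p).card : ℚ)⁻¹))) = (r : ℚ) + 1 := by
        rw [Finset.sum_ite]
        have hs1 : (s.filter fun a => ¬ σ a = p).filter (fun a => ¬ σ.SameCycle p a) =
            s \ orb σ p := by
          ext a
          simp only [Finset.mem_filter, Finset.mem_sdiff, mem_orb]
          constructor
          · rintro ⟨⟨ha, -⟩, hsc⟩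
            exact ⟨ha, hsc⟩
          · rintro ⟨ha, hsc⟩
            exact ⟨⟨ha, fun hc => hsc (sameCycle_of_apply_eq hc)⟩, hsc⟩
        have hsecond : (∑ a ∈ s.filter (fun a => ¬ σ a = p),
            (if σ.SameCycle p a then (0:ℚ)
             else (((orb σ a).card : ℚ)⁻¹ + ((orb σ p).card : ℚ)⁻¹))) =
            ∑ a ∈ s \ orb σ p, (((orb σ a).card : ℚ)⁻¹ + ((orb σ p).card : ℚ)⁻¹) := by
          rw [Finset.sum_ite, Finset.sum_const, smul_zero, zero_add, hs1]
        have hfirst : (∑ _a ∈ s.filter (fun a => σ a = p),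
            ((s.card : ℚ) + 1) * (((orb σ p).card : ℚ) - 1) / ((orb σ p).card : ℚ)) =
            (if σ p = p then 0
             else ((s.card : ℚ) + 1) * (((orb σ p).card : ℚ) - 1) / ((orb σ p).card : ℚ)) := by
          rw [filter_preim_p hp hsupp]
          split_ifs with hpp
          · simp
          · rw [Finset.sum_singleton]
        have hsplit2 : (∑ a ∈ s \ orb σ p,
            (((orb σ a).card : ℚ)⁻¹ + ((orb σ p).card : ℚ)⁻¹)) =
            ((Cn σ : ℚ) - (Fintype.card α : ℚ) + (s.card : ℚ)) +
              ((s.card : ℚ) + 1 - ((orb σ p).card : ℚ)) * ((orb σ p).card : ℚ)⁻¹ := by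
          rw [Finset.sum_add_distrib, sum_inv_s1 hp hsupp, Finset.sum_const, nsmul_eq_mul,
            card_s1 hp hsupp]
        rw [hsecond, hfirst, hsplit2]
        have heqQ : (r : ℚ) + 1 + (Fintype.card α : ℚ) =
            2 * (s.card : ℚ) + (Cn σ : ℚ) := by exact_mod_cast heq
        by_cases hpp : σ p = p
        · rw [if_pos hpp]
          have hL0 : ((orb σ p).card : ℚ) = 1 := by
            rw [orb_of_fixed hpp, Finset.card_singleton, Nat.cast_one]
          rw [hL0]
          simp only [inv_one]
          linarith
        · rw [if_neg hpp]
          have hC : (Cn σ : ℚ) = (r : ℚ) + 1 + (Fintype.card α : ℚ) - 2 * (s.card : ℚ) := by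
            linarith
          rw [hC]
          field_simp
          ring
      rw [hw]
      have hrfac : (((r + 1).factorial : ℕ) : ℚ) = ((r : ℚ) + 1) * ((r.factorial : ℕ) : ℚ) := by
        rw [Nat.factorial_succ]; push_cast; ring
      rw [hrfac]
      field_simp

section Link
variable {σ : Perm α}

lemma orb_eq_support_cycleOf {x : α} (hx : x ∈ σ.support) :
    orb σ x = (σ.cycleOf x).support := by
  ext y
  rw [mem_orb, Equiv.Perm.mem_support_cycleOf_iff]
  exact ⟨fun h => ⟨h, hx⟩, fun h => h.1⟩

lemma moved_image_eq : σ.support.image (orb σ) =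
    σ.cycleFactorsFinset.image (fun c => c.support) := by
  ext O
  simp only [Finset.mem_image]
  constructor
  · rintro ⟨x, hx, rfl⟩
    refine ⟨σ.cycleOf x, ?_, (orb_eq_support_cycleOf hx).symm⟩
    exact (Equiv.Perm.cycleOf_mem_cycleFactorsFinset_iff).mpr hx
  · rintro ⟨c, hc, rfl⟩
    have hcyc := (Equiv.Perm.mem_cycleFactorsFinset_iff.mp hc).1
    obtain ⟨x, hx⟩ := hcyc.nonempty_support
    have hxσ : x ∈ σ.support := by
      rw [Equiv.Perm.mem_support]
      rw [← (Equiv.Perm.mem_cycleFactorsFinset_iff.mp hc).2 x hx]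
      exact Equiv.Perm.mem_support.mp hx
    refine ⟨x, hxσ, ?_⟩
    rw [orb_eq_support_cycleOf hxσ, ← Equiv.Perm.cycle_is_cycleOf hx hc]

lemma support_injOn_factors :
    Set.InjOn (fun c : Perm α => c.support) σ.cycleFactorsFinset := by
  intro c hc d hd h
  simp only [Finset.mem_coe] at hc hd
  have hc' := Equiv.Perm.mem_cycleFactorsFinset_iff.mp hc
  have hd' := Equiv.Perm.mem_cycleFactorsFinset_iff.mp hd
  simp only at h
  ext y
  by_cases hy : y ∈ c.support
  · rw [hc'.2 y hy, ← hd'.2 y (h ▸ hy)]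
  · have hyd : y ∉ d.support := by rw [← h]; exact hy
    rw [Equiv.Perm.notMem_support.mp hy, Equiv.Perm.notMem_support.mp hyd]

lemma two_le_card_of_moved {x : α} (hx : x ∈ σ.support) : 2 ≤ (orb σ x).card := by
  have h1 : σ x ∈ orb σ x := mem_orb.mpr ⟨1, by simp⟩
  have h2 : x ∈ orb σ x := self_mem_orb x
  have hne : x ≠ σ x := fun h => (Equiv.Perm.mem_support.mp hx) h.symm
  calc 2 = ({x, σ x} : Finset α).card := by
        rw [Finset.card_insert_of_notMem (by simpa using hne), Finset.card_singleton]
    _ ≤ _ := Finset.card_le_card (Finset.insert_subset h2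
        (Finset.singleton_subset_iff.mpr h1))

lemma cycS_eq_union :
    cycS σ = σ.support.image (orb σ) ∪ (Finset.univ \ σ.support).image (orb σ) := by
  rw [cycS, ← Finset.image_union]
  congr 1
  rw [Finset.union_sdiff_of_subset (Finset.subset_univ _)]

lemma disjoint_moved_fixed : Disjoint (σ.support.image (orb σ))
    ((Finset.univ \ σ.support).image (orb σ)) := by
  rw [Finset.disjoint_left]
  intro O hO hO'
  obtain ⟨x, hx, rfl⟩ := Finset.mem_image.mp hO
  obtain ⟨y, hy, hyO⟩ := Finset.mem_image.mp hO'
  rw [Finset.mem_sdiff] at hy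
  have hfix : σ y = y := Equiv.Perm.notMem_support.mp hy.2
  have h2 := two_le_card_of_moved hx
  rw [← hyO, orb_of_fixed hfix, Finset.card_singleton] at h2
  omega

lemma card_fixed_image : ((Finset.univ \ σ.support).image (orb σ)).card =
    Fintype.card α - σ.support.card := by
  rw [Finset.card_image_of_injOn, Finset.card_sdiff_of_subset (Finset.subset_univ _), Finset.card_univ]
  intro x hx y hy h
  simp only [Finset.mem_coe, Finset.mem_sdiff] at hx hy
  have hfx : σ x = x := Equiv.Perm.notMem_support.mp hx.2
  have hfy : σ y = y := Equiv.Perm.notMem_support.mp hy.2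
  rw [orb_of_fixed hfx, orb_of_fixed hfy] at h
  exact Finset.singleton_injective h

lemma Cn_eq_cycleType : Cn σ = Multiset.card σ.cycleType + (Fintype.card α - σ.support.card) := by
  rw [Cn, cycS_eq_union, Finset.card_union_of_disjoint disjoint_moved_fixed,
    card_fixed_image, moved_image_eq, Finset.card_image_of_injOn support_injOn_factors]
  congr 1
  rw [Equiv.Perm.cycleType]
  simp

lemma Pl_eq_cycleType : Pl σ = (σ.cycleType.map (fun i => (i : ℚ))).prod := by
  rw [Pl, cycS_eq_union, Finset.prod_union disjoint_moved_fixed]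
  have h2 : ∏ O ∈ (Finset.univ \ σ.support).image (orb σ), ((O.card : ℚ)) = 1 := by
    apply Finset.prod_eq_one
    intro O hO
    obtain ⟨y, hy, rfl⟩ := Finset.mem_image.mp hO
    rw [Finset.mem_sdiff] at hy
    rw [orb_of_fixed (Equiv.Perm.notMem_support.mp hy.2), Finset.card_singleton, Nat.cast_one]
  rw [h2, mul_one, moved_image_eq, Finset.prod_image support_injOn_factors]
  rw [Equiv.Perm.cycleType, Finset.prod]
  simp [Multiset.map_map, Function.comp]

end Link

section Bridge
variable {p : α}

lemma transitive_iff (r : ℕ) (τ : Fin r → Perm α)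
    (h1 : ∀ t, ∃ b : α, b ≠ p ∧ τ t = Equiv.swap p b) :
    (∀ x y : α, ∃ g ∈ Subgroup.closure (Set.range τ), g x = y) ↔
      (∀ x ∈ Finset.univ.erase p, ∃ t, (τ t) p = x) := by
  constructor
  · intro htr x hx
    rw [Finset.mem_erase] at hx
    by_contra hc
    push_neg at hc
    have hfix : ∀ g ∈ Subgroup.closure (Set.range τ), g x = x := by
      intro g hg
      induction hg using Subgroup.closure_induction with
      | mem g hgr =>
        obtain ⟨t, rfl⟩ := hgr
        obtain ⟨b, hb, hbt⟩ := h1 t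
        have hbx : b ≠ x := by
          intro hbx
          apply hc t
          rw [hbt, Equiv.swap_apply_left, hbx]
        rw [hbt]
        exact Equiv.swap_apply_of_ne_of_ne hx.1 (Ne.symm hbx)
      | one => rfl
      | mul g h hg hh hgx hhx => rw [Equiv.Perm.mul_apply, hhx, hgx]
      | inv g hg hgx =>
        conv_lhs => rw [← hgx]
        exact Equiv.symm_apply_apply g x
    obtain ⟨g, hg, hgx⟩ := htr x p
    rw [hfix g hg] at hgx
    exact hx.1 hgx
  · intro hcov x y
    have hgen : ∀ z : α, ∃ g ∈ Subgroup.closure (Set.range τ), g z = p := by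
      intro z
      rcases eq_or_ne z p with rfl | hz
      · exact ⟨1, Subgroup.one_mem _, rfl⟩
      · obtain ⟨t, ht⟩ := hcov z (Finset.mem_erase.mpr ⟨hz, Finset.mem_univ z⟩)
        obtain ⟨b, hb, hbt⟩ := h1 t
        have hbz : b = z := by rw [hbt, Equiv.swap_apply_left] at ht; exact ht
        refine ⟨τ t, Subgroup.subset_closure ⟨t, rfl⟩, ?_⟩
        rw [hbt, hbz, Equiv.swap_apply_right]
    obtain ⟨gx, hgx, hgxe⟩ := hgen x
    obtain ⟨gy, hgy, hgye⟩ := hgen y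
    refine ⟨gy⁻¹ * gx, Subgroup.mul_mem _ (Subgroup.inv_mem _ hgy) hgx, ?_⟩
    rw [Equiv.Perm.mul_apply, hgxe, ← hgye, Equiv.Perm.inv_eq_iff_eq]

lemma starFact_eq_card (n r : ℕ) (p : Fin n) (σ : Perm (Fin n)) :
    starFact n r p σ = (starSeqs r p (Finset.univ.erase p) σ).card := by
  rw [starFact, ← Fintype.card_coe, ← Nat.card_eq_fintype_card]
  apply Nat.card_congr
  refine ⟨fun τ => ⟨fun t => (τ.1 t) p, ?_⟩, fun a => ⟨fun t => Equiv.swap p (a.1 t), ?_⟩,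
    ?_, ?_⟩
  · -- membership in starSeqs
    obtain ⟨h1, h2, h3⟩ := τ.2
    have hfn : (fun t => Equiv.swap p ((τ.1 t) p)) = τ.1 := by
      funext t
      obtain ⟨b, hb, hbt⟩ := h1 t
      rw [hbt, Equiv.swap_apply_left]
    refine mem_starSeqs.mpr ⟨?_, ?_, ?_⟩
    · intro t
      obtain ⟨b, hb, hbt⟩ := h1 t
      rw [hbt, Equiv.swap_apply_left]
      exact Finset.mem_erase.mpr ⟨hb, Finset.mem_univ b⟩
    · exact (transitive_iff r τ.1 h1).mp h3
    · rw [show (List.ofFn fun t => Equiv.swap p ((τ.1 t) p)) = List.ofFn τ.1 from by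
        rw [hfn], h2]
  · -- conditions of starFact
    obtain ⟨h1, h2, h3⟩ := mem_starSeqs.mp a.2
    refine ⟨?_, h3, ?_⟩
    · intro t
      exact ⟨a.1 t, (Finset.mem_erase.mp (h1 t)).1, rfl⟩
    · rw [transitive_iff r _ (fun t => ⟨a.1 t, (Finset.mem_erase.mp (h1 t)).1, rfl⟩)]
      intro x hx
      obtain ⟨t, ht⟩ := h2 x hx
      exact ⟨t, by rw [Equiv.swap_apply_left, ht]⟩
  · intro τ
    ext t : 2
    obtain ⟨b, hb, hbt⟩ := τ.2.1 t
    simp only [hbt, Equiv.swap_apply_left]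
  · intro a
    ext t : 2
    simp only [Equiv.swap_apply_left]

end Bridge
end StarFact

/-- Pak's case: for `n = mk+1` and `σ` fixing the pivot `n` with `m`
other cycles each of length `k`, the number of transitive ordered factorizations of
`σ` into `n+m-1` star transpositions with pivot `n` is `((n+m-1)!/n!) kᵐ`. -/
theorem pak_case (k m n : ℕ) (hk : 2 ≤ k) (hm : 1 ≤ m) (hn : n = m * k + 1)
    (σ : Equiv.Perm (Fin n))
    (hfix : σ ⟨n - 1, by omega⟩ = ⟨n - 1, by omega⟩)
    (hσ : fullCycleType σ = 1 ::ₘ Multiset.replicate m k) :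
    (starFact n (n + m - 1) ⟨n - 1, by omega⟩ σ : ℚ) =
      ((n + m - 1).factorial : ℚ) / (n.factorial : ℚ) * (k : ℚ) ^ m := by
  have hn3 : 3 ≤ n := by nlinarith
  set p : Fin n := ⟨n - 1, by omega⟩ with hp_def
  -- cycle type facts
  have hct0 : σ.cycleType.count 1 = 0 := by
    rw [Multiset.count_eq_zero]
    intro hc
    have := Equiv.Perm.two_le_of_mem_cycleType hc
    omega
  have hcnt : n - σ.support.card = 1 := by
    have h1 := congrArg (Multiset.count 1) hσ
    rw [fullCycleType, Multiset.count_add, hct0, Multiset.count_replicate_self,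
      Multiset.count_cons_self, Multiset.count_replicate] at h1
    split_ifs at h1 with hk1
    · omega
    · omega
  have hct : σ.cycleType = Multiset.replicate m k := by
    have h1 : σ.cycleType + Multiset.replicate (n - σ.support.card) 1 =
        1 ::ₘ Multiset.replicate m k := hσ
    rw [hcnt] at h1
    have h2 : (Multiset.replicate 1 1 : Multiset ℕ) = {1} := rfl
    rw [h2] at h1
    have h3 : (1 ::ₘ Multiset.replicate m k : Multiset ℕ) =
        Multiset.replicate m k + {1} := by
      rw [add_comm, Multiset.singleton_add]
    rw [h3] at h1
    exact add_right_cancel h1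
  have hsuppcard : σ.support.card = m * k := by
    have := Equiv.Perm.sum_cycleType σ
    rw [hct, Multiset.sum_replicate, smul_eq_mul] at this
    omega
  -- apply the main theorem
  have hp : p ∉ Finset.univ.erase p := Finset.notMem_erase p _
  have hsupp : σ.support ⊆ insert p (Finset.univ.erase p) := by
    rw [Finset.insert_erase (Finset.mem_univ p)]
    exact Finset.subset_univ _
  have hcardFin : Fintype.card (Fin n) = n := Fintype.card_fin n
  have hCn : StarFact.Cn σ = m + 1 := by
    rw [StarFact.Cn_eq_cycleType, hct, Multiset.card_replicate, hcardFin, hsuppcard]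
    omega
  have hPl : StarFact.Pl σ = (k : ℚ) ^ m := by
    rw [StarFact.Pl_eq_cycleType, hct]
    simp
  have hcard_erase : (Finset.univ.erase p).card = n - 1 := by
    rw [Finset.card_erase_of_mem (Finset.mem_univ p), Finset.card_univ, hcardFin]
  have hcond : (n + m - 1) + Fintype.card (Fin n) =
      2 * (Finset.univ.erase p).card + StarFact.Cn σ := by
    rw [hcardFin, hCn, hcard_erase]
    omega
  have hmain := (StarFact.main p (n + m - 1) (Finset.univ.erase p) σ hp hsupp).2 hcond
  rw [hcard_erase] at hmain
  have hfact : (n - 1) + 1 = n := by omega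
  rw [hfact, hPl] at hmain
  rw [StarFact.starFact_eq_card]
  have hnfac : ((n.factorial : ℕ) : ℚ) ≠ 0 := by
    exact_mod_cast (Nat.factorial_pos n).ne'
  rw [div_mul_eq_mul_div, eq_div_iff hnfac]
  linarith [hmain]
end

section
/- Let g ≥ 0 and let α be a partition of n with m parts. Then a_g(α) = b_g(α ∪ 1^{n−1}) / (n! (2n−1)^{n+m−3+2g}), where α ∪ 1^{n−1} is the partition of 2n−1 with m+n−1 parts obtained from α by adjoining n−1 parts equal to 1, and b is computed for partitions of 2n−1. -/
open scoped Classical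

lemma pPow_add_replicate_one (i k : ℕ) (α : Multiset ℕ) :
    pPow i (α + Multiset.replicate k 1) = pPow i α + k := by
  simp [pPow, Multiset.map_replicate]

lemma pPow_one_eq_sum (α : Multiset ℕ) : pPow 1 α = (α.sum : ℚ) := by
  simp [pPow, pow_one]

lemma qhatPow_aug (i n : ℕ) (hn : 1 ≤ n) (α : Multiset ℕ) (hsum : α.sum = n) :
    qhatPow i (α + Multiset.replicate (n - 1) 1) = qPow i α := by
  have h1 : ((n - 1 : ℕ) : ℚ) = (n : ℚ) - 1 := by
    have := Nat.cast_sub (R := ℚ) hn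
    simpa using this
  simp only [qhatPow, qPow, pPow_add_replicate_one, pPow_one_eq_sum, hsum, h1]
  ring

lemma Qhatser_aug (g n : ℕ) (hn : 1 ≤ n) (α : Multiset ℕ) (hsum : α.sum = n) :
    Qhatser g (α + Multiset.replicate (n - 1) 1) = Qser g α := by
  unfold Qhatser Qser
  refine Finset.sum_congr rfl fun β _ => ?_
  congr 2
  refine Multiset.map_congr rfl fun b _ => ?_
  rw [qhatPow_aug _ n hn α hsum]

/-- `a_g(α) = b_g(α ∪ 1^{n-1}) / (n! (2n-1)^{n+m-3+2g})` for `α` a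
partition of `n` with `m` parts. -/
theorem aStar_eq_bHur_augmented (g n m : ℕ) (hn : 1 ≤ n)
    (α : Multiset ℕ) (hpos : ∀ a ∈ α, 0 < a)
    (hsum : α.sum = n) (hcard : Multiset.card α = m) :
    aStar g α =
      bHur g (α + Multiset.replicate (n - 1) 1) /
        ((n.factorial : ℚ) * ((2 * n - 1 : ℕ) : ℚ) ^ ((n : ℤ) + m - 3 + 2 * g)) := by
  have hm : 1 ≤ m := by
    rcases Multiset.empty_or_exists_mem α with h | ⟨a, ha⟩
    · simp [h] at hsum; omega
    · have := Multiset.card_pos_iff_exists_mem.2 ⟨a, ha⟩; omega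
  set α' := α + Multiset.replicate (n - 1) 1 with hα'
  have hcard' : Multiset.card α' = m + (n - 1) := by
    simp [hα', hcard]
  have hsum' : α'.sum = 2 * n - 1 := by
    simp [hα', hsum]; omega
  have hprod' : (α'.map fun a => (a : ℚ)).prod = (α.map fun a => (a : ℚ)).prod := by
    simp [hα', Multiset.map_replicate]
  have hQ : Qhatser g α' = Qser g α := Qhatser_aug g n hn α hsum
  have hfac : Multiset.card α' - 1 + 2 * g = n + m - 2 + 2 * g := by
    rw [hcard']; omega
  have hexp : (Multiset.card α' : ℤ) - 2 + 2 * g = (n : ℤ) + m - 3 + 2 * g := by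
    rw [hcard']
    have : ((m + (n - 1) : ℕ) : ℤ) = (m : ℤ) + n - 1 := by push_cast [hn]; ring
    rw [this]; ring
  have hS : ((2 * n - 1 : ℕ) : ℚ) ≠ 0 := by
    exact_mod_cast (by omega : 2 * n - 1 ≠ 0)
  have hSz : ((2 * n - 1 : ℕ) : ℚ) ^ ((n : ℤ) + m - 3 + 2 * g) ≠ 0 :=
    zpow_ne_zero _ hS
  have hnf : ((n.factorial : ℕ) : ℚ) ≠ 0 := by exact_mod_cast n.factorial_ne_zero
  unfold aStar bHur
  rw [hQ, hprod', hfac, hexp, hsum', hsum, hcard]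
  have key : ∀ F P Q S nf : ℚ, S ≠ 0 → nf ≠ 0 →
      F / nf * P * Q = F * S * P * Q / (nf * S) := by
    intro F P Q S nf hS hnf
    field_simp
  exact key _ _ _ _ _ hSz hnf
end

section
/- Let α be a partition of n. Then in the ring of formal power series ℚ[[x]], Σ_{g≥0} Q_g(α) x^{2g} = ξ(x)^{n−1} · Σ_{g≥0} Q̂_g(α) x^{2g}. -/
open scoped Classical

/-! ### Auxiliary machinery -/

open PowerSeries Finset in
lemma my_coeff_pow_eq_zero {u : PowerSeries ℚ} (hu : PowerSeries.constantCoeff u = 0)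
    {m k : ℕ} (h : m < k) : PowerSeries.coeff m (u ^ k) = 0 := by
  induction k generalizing m with
  | zero => omega
  | succ k ih =>
    rw [pow_succ, PowerSeries.coeff_mul]
    apply Finset.sum_eq_zero
    rintro ⟨i, j⟩ hij
    rw [Finset.HasAntidiagonal.mem_antidiagonal] at hij
    rcases lt_or_ge i k with hi | hi
    · rw [ih hi, zero_mul]
    · have : j = 0 := by omega
      subst this
      rw [PowerSeries.coeff_zero_eq_constantCoeff, hu, mul_zero]

open PowerSeries Finset in
lemma my_coeff_pow_mul_eq_zero {u w : PowerSeries ℚ} (hu : PowerSeries.constantCoeff u = 0)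
    {m k : ℕ} (h : m < k) : PowerSeries.coeff m (u ^ k * w) = 0 := by
  rw [PowerSeries.coeff_mul]
  apply Finset.sum_eq_zero
  rintro ⟨i, j⟩ hij
  rw [Finset.HasAntidiagonal.mem_antidiagonal] at hij
  rw [my_coeff_pow_eq_zero hu (by omega), zero_mul]

open PowerSeries Finset in
lemma my_coeff_mul_congr {f f' g : PowerSeries ℚ} {m : ℕ}
    (h : ∀ i ≤ m, PowerSeries.coeff i f = PowerSeries.coeff i f') :
    PowerSeries.coeff m (f * g) = PowerSeries.coeff m (f' * g) := by
  rw [PowerSeries.coeff_mul, PowerSeries.coeff_mul]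
  refine Finset.sum_congr rfl ?_
  rintro ⟨i, j⟩ hij
  rw [Finset.HasAntidiagonal.mem_antidiagonal] at hij
  rw [h i (by omega)]

open PowerSeries Finset in
lemma my_ode_unique {A C P : PowerSeries ℚ}
    (h0 : PowerSeries.coeff 0 A = PowerSeries.coeff 0 C)
    (hA : d⁄dX ℚ A = P * A) (hC : d⁄dX ℚ C = P * C) : A = C := by
  ext m
  induction m using Nat.strong_induction_on with
  | _ m ih =>
    match m with
    | 0 => exact h0
    | m + 1 =>
      have h1 : PowerSeries.coeff m (d⁄dX ℚ A) = PowerSeries.coeff m (d⁄dX ℚ C) := by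
        rw [hA, hC, PowerSeries.coeff_mul, PowerSeries.coeff_mul]
        refine Finset.sum_congr rfl ?_
        rintro ⟨i, j⟩ hij
        rw [Finset.HasAntidiagonal.mem_antidiagonal] at hij
        rw [ih j (by omega)]
      rw [PowerSeries.coeff_derivative, PowerSeries.coeff_derivative] at h1
      exact mul_right_cancel₀ (by positivity) h1

open PowerSeries Finset in
lemma my_derivative_psLog_mul (h : PowerSeries ℚ) (h0 : PowerSeries.constantCoeff h = 1) :
    d⁄dX ℚ (psLog h) * h = d⁄dX ℚ h := by
  set u : PowerSeries ℚ := h - 1 with hu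
  have hu0 : PowerSeries.constantCoeff u = 0 := by simp [hu, h0]
  have hnu0 : PowerSeries.constantCoeff (-u) = 0 := by simp [hu0]
  have hderiv : d⁄dX ℚ u = d⁄dX ℚ h := by
    rw [hu, Derivation.map_sub]; simp
  ext m
  have key : ∀ i ≤ m, PowerSeries.coeff i (d⁄dX ℚ (psLog h)) =
      PowerSeries.coeff i ((∑ k ∈ Finset.range (m + 1), (-u) ^ k) * d⁄dX ℚ u) := by
    intro i him
    have stepA : PowerSeries.coeff i (d⁄dX ℚ (psLog h)) =
        ∑ k ∈ Finset.range (i + 1), PowerSeries.coeff i ((-u) ^ k * d⁄dX ℚ u) := by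
      rw [PowerSeries.coeff_derivative, psLog, PowerSeries.coeff_mk, Finset.sum_mul,
        Finset.sum_range_succ']
      have f0 : ((-1 : ℚ) ^ (0 + 1) / ((0 : ℕ) : ℚ)) * PowerSeries.coeff (i+1) (u ^ 0)
          * ((i : ℚ) + 1) = 0 := by norm_num
      rw [f0, add_zero]
      refine Finset.sum_congr rfl ?_
      intro k _
      have hd : PowerSeries.coeff i (d⁄dX ℚ (u ^ (k+1))) =
          PowerSeries.coeff (i+1) (u ^ (k+1)) * ((i : ℚ) + 1) := PowerSeries.coeff_derivative _ _
      rw [mul_assoc, ← hd, Derivation.leibniz_pow]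
      have hno : (-u) ^ k * d⁄dX ℚ u = (-1 : ℚ⟦X⟧) ^ k * (u ^ k * d⁄dX ℚ u) := by
        rw [neg_pow]; ring
      rw [hno]
      have hc : PowerSeries.coeff i ((k+1 : ℕ) • u ^ (k+1-1) • d⁄dX ℚ u) =
          ((k:ℚ)+1) * PowerSeries.coeff i (u ^ k * d⁄dX ℚ u) := by
        rw [map_nsmul, smul_eq_mul, nsmul_eq_mul, Nat.add_sub_cancel]
        push_cast; ring
      rw [hc]
      have hk1 : ((k:ℚ)+1) ≠ 0 := by positivity
      rcases Nat.even_or_odd k with hk | hk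
      · have e2 : Even (k+1+1) := by rcases hk with ⟨t, ht⟩; exact ⟨t+1, by omega⟩
        rw [hk.neg_one_pow, e2.neg_one_pow, one_mul]
        push_cast; field_simp
      · have o2 : Odd (k+1+1) := by rcases hk with ⟨t, ht⟩; exact ⟨t+1, by omega⟩
        rw [hk.neg_one_pow, o2.neg_one_pow, neg_one_mul, map_neg]
        push_cast; field_simp
    have stepB : PowerSeries.coeff i ((∑ k ∈ Finset.range (m + 1), (-u) ^ k) * d⁄dX ℚ u) =
        ∑ k ∈ Finset.range (i + 1), PowerSeries.coeff i ((-u) ^ k * d⁄dX ℚ u) := by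
      rw [Finset.sum_mul, map_sum]
      refine (Finset.sum_subset (Finset.range_subset_range.2 (by omega)) ?_).symm
      intro k _ hk
      rw [Finset.mem_range, not_lt] at hk
      exact my_coeff_pow_mul_eq_zero hnu0 (by omega)
    rw [stepA, stepB]
  rw [my_coeff_mul_congr key]
  have geom : (∑ k ∈ Finset.range (m + 1), (-u) ^ k) * h = 1 - (-u) ^ (m + 1) := by
    have hg := geom_sum_mul (-u) (m + 1)
    have h2 : h = -((-u) - 1) := by rw [hu]; ring
    rw [h2, mul_neg, hg]; ring
  rw [mul_right_comm, geom, sub_mul, one_mul, map_sub,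
    my_coeff_pow_mul_eq_zero hnu0 (by omega), sub_zero, hderiv]

open PowerSeries Finset in
lemma my_derivative_pow_psLog (h : PowerSeries ℚ) (h0 : PowerSeries.constantCoeff h = 1)
    (c : ℕ) : d⁄dX ℚ (h ^ c) = (c : ℚ⟦X⟧) * d⁄dX ℚ (psLog h) * h ^ c := by
  induction c with
  | zero => simp
  | succ k _ =>
    rw [Derivation.leibniz_pow, ← my_derivative_psLog_mul h h0]
    rw [Nat.add_sub_cancel, smul_eq_mul, nsmul_eq_mul]
    push_cast
    ring

open PowerSeries Finset in
lemma my_even_coeff_mul {f g : PowerSeries ℚ}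
    (hf : ∀ m, Odd m → PowerSeries.coeff m f = 0)
    (hg : ∀ m, Odd m → PowerSeries.coeff m g = 0) :
    ∀ m, Odd m → PowerSeries.coeff m (f * g) = 0 := by
  intro m hm
  rw [PowerSeries.coeff_mul]
  apply Finset.sum_eq_zero
  rintro ⟨i, j⟩ hij
  rw [Finset.HasAntidiagonal.mem_antidiagonal] at hij
  rcases Nat.even_or_odd i with hi | hi
  · rcases Nat.even_or_odd j with hj | hj
    · exfalso
      rw [← hij, Nat.odd_iff] at hm
      rw [Nat.even_iff] at hi hj
      omega
    · rw [hg j hj, mul_zero]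
  · rw [hf i hi, zero_mul]

open PowerSeries Finset in
lemma my_even_coeff_pow {f : PowerSeries ℚ}
    (hf : ∀ m, Odd m → PowerSeries.coeff m f = 0) (k : ℕ) :
    ∀ m, Odd m → PowerSeries.coeff m (f ^ k) = 0 := by
  induction k with
  | zero =>
    intro m hm
    rw [pow_zero, PowerSeries.coeff_one, if_neg (by rintro rfl; simp [Nat.odd_iff] at hm)]
  | succ k ih =>
    rw [pow_succ]
    exact my_even_coeff_mul ih hf

open PowerSeries Finset in
lemma my_xi_even : ∀ m, Odd m → PowerSeries.coeff m xiSeries = 0 := by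
  intro m hm
  rw [xiSeries, PowerSeries.coeff_mk, if_neg (by rwa [Nat.not_even_iff_odd])]

open PowerSeries Finset in
lemma my_constantCoeff_xi : PowerSeries.constantCoeff xiSeries = 1 := by
  rw [← PowerSeries.coeff_zero_eq_constantCoeff, xiSeries, PowerSeries.coeff_mk]
  norm_num

open PowerSeries Finset in
lemma my_psLog_xi_even : ∀ m, Odd m → PowerSeries.coeff m (psLog xiSeries) = 0 := by
  intro m hm
  rw [psLog, PowerSeries.coeff_mk]
  apply Finset.sum_eq_zero
  intro k _
  have hsub : ∀ i, Odd i → PowerSeries.coeff i (xiSeries - 1) = 0 := by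
    intro i hi
    rw [map_sub, my_xi_even i hi, PowerSeries.coeff_one,
      if_neg (by rintro rfl; simp [Nat.odd_iff] at hi), sub_zero]
  rw [my_even_coeff_pow hsub k m hm, mul_zero]

lemma my_autCard_pos (s : Multiset ℕ) : 0 < autCard s :=
  Finset.prod_pos fun _ _ => Nat.factorial_pos _

lemma my_autCard_cons (j : ℕ) (t : Multiset ℕ) :
    autCard (j ::ₘ t) = (t.count j + 1) * autCard t := by
  classical
  unfold autCard
  by_cases hj : j ∈ t
  · have hmem := Multiset.mem_toFinset.2 hj
    have hpr : ∏ i ∈ t.toFinset.erase j, ((j ::ₘ t).count i).factorial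
        = ∏ i ∈ t.toFinset.erase j, (t.count i).factorial :=
      Finset.prod_congr rfl fun i hi => by
        rw [Multiset.count_cons_of_ne (Finset.ne_of_mem_erase hi)]
    rw [Multiset.toFinset_cons, Finset.insert_eq_self.2 hmem,
      ← Finset.mul_prod_erase _ _ hmem,
      ← Finset.mul_prod_erase _ (fun i => (t.count i).factorial) hmem,
      Multiset.count_cons_self, Nat.factorial_succ, hpr, mul_assoc]
  · have hj' : j ∉ t.toFinset := by simpa using hj
    rw [Multiset.toFinset_cons, Finset.prod_insert hj', Multiset.count_cons_self,
      Multiset.count_eq_zero_of_notMem hj]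
    simp only [zero_add, Nat.factorial_one, one_mul]
    refine Finset.prod_congr rfl fun i hi => ?_
    rw [Multiset.count_cons_of_ne (by rintro rfl; exact hj' hi)]

/-- The generic partition-sum term. -/
noncomputable def myTermM (c : ℕ → ℚ) (s : Multiset ℕ) : ℚ := (s.map c).prod / (autCard s : ℚ)

/-- The generic partition sum. -/
noncomputable def mySfun (c : ℕ → ℚ) (g : ℕ) : ℚ := ∑ β : Nat.Partition g, myTermM c β.parts

lemma myTermM_cons (c : ℕ → ℚ) (j : ℕ) (t : Multiset ℕ) :
    ((t.count j : ℚ) + 1) * myTermM c (j ::ₘ t) = c j * myTermM c t := by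
  unfold myTermM
  rw [Multiset.map_cons, Multiset.prod_cons, my_autCard_cons]
  have h1 : ((t.count j : ℚ) + 1) ≠ 0 := by positivity
  have h2 : ((autCard t : ℕ) : ℚ) ≠ 0 := Nat.cast_ne_zero.2 (my_autCard_pos t).ne'
  push_cast
  field_simp

/-- Remove a part from a partition. -/
def myErasePart {g : ℕ} (β : Nat.Partition g) (j : ℕ) (hj : j ∈ β.parts) :
    Nat.Partition (g - j) where
  parts := β.parts.erase j
  parts_pos := fun hi => β.parts_pos (Multiset.mem_of_mem_erase hi)
  parts_sum := by
    have hce := Multiset.cons_erase hj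
    have h2 : β.parts.sum = g := β.parts_sum
    have h3 : β.parts.sum = j + (β.parts.erase j).sum := by
      conv_lhs => rw [← hce]
      rw [Multiset.sum_cons]
    omega

/-- Add a part to a partition. -/
def myInsertPart {g j : ℕ} (hj1 : 1 ≤ j) (hjg : j ≤ g) (β : Nat.Partition (g - j)) :
    Nat.Partition g where
  parts := j ::ₘ β.parts
  parts_pos := fun hi => by
    rcases Multiset.mem_cons.1 hi with rfl | h
    · exact hj1
    · exact β.parts_pos h
  parts_sum := by rw [Multiset.sum_cons, β.parts_sum]; omega

lemma mySfun_rec (c : ℕ → ℚ) (g : ℕ) :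
    (g : ℚ) * mySfun c g = ∑ j ∈ Finset.Icc 1 g, (j : ℚ) * c j * mySfun c (g - j) := by
  classical
  have step1 : ∀ β : Nat.Partition g, (g : ℚ) * myTermM c β.parts
      = ∑ j ∈ β.parts.toFinset, (j : ℚ) * c j * myTermM c (β.parts.erase j) := by
    intro β
    have hg : (g : ℚ) = ∑ j ∈ β.parts.toFinset, (β.parts.count j : ℚ) * (j : ℚ) := by
      have h1 : ((g : ℕ) : ℚ) = ((β.parts.sum : ℕ) : ℚ) := by rw [β.parts_sum]
      rw [h1, Nat.cast_multiset_sum, Finset.sum_multiset_map_count]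
      refine Finset.sum_congr rfl fun j _ => ?_
      rw [nsmul_eq_mul]
    rw [hg, Finset.sum_mul]
    refine Finset.sum_congr rfl fun j hj => ?_
    have hjm : j ∈ β.parts := Multiset.mem_toFinset.1 hj
    have hce := Multiset.cons_erase hjm
    have hcount : (β.parts.count j : ℚ) = ((β.parts.erase j).count j : ℚ) + 1 := by
      conv_lhs => rw [← hce]
      rw [Multiset.count_cons_self]
      push_cast; ring
    have ht : myTermM c β.parts = myTermM c (j ::ₘ β.parts.erase j) := by rw [hce]
    rw [ht, hcount]
    linear_combination (j : ℚ) * myTermM_cons c j (β.parts.erase j)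
  rw [mySfun, Finset.mul_sum]
  rw [Finset.sum_congr rfl fun β _ => step1 β]
  rw [← Finset.sum_sigma (Finset.univ : Finset (Nat.Partition g)) (fun β => β.parts.toFinset)
    (fun p => (p.2 : ℚ) * c p.2 * myTermM c (p.1.parts.erase p.2))]
  have hrhs : ∑ j ∈ Finset.Icc 1 g, (j : ℚ) * c j * mySfun c (g - j)
      = ∑ q ∈ (Finset.Icc 1 g).sigma (fun j => (Finset.univ : Finset (Nat.Partition (g - j)))),
          (q.1 : ℚ) * c q.1 * myTermM c q.2.parts := by
    rw [Finset.sum_sigma]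
    refine Finset.sum_congr rfl fun j _ => ?_
    rw [mySfun, Finset.mul_sum]
  rw [hrhs]
  refine Finset.sum_bij'
    (fun p hp => (⟨p.2, myErasePart p.1 p.2 (Multiset.mem_toFinset.1 (Finset.mem_sigma.1 hp).2)⟩ :
      Σ j : ℕ, Nat.Partition (g - j)))
    (fun q hq => (⟨myInsertPart (Finset.mem_Icc.1 (Finset.mem_sigma.1 hq).1).1
      (Finset.mem_Icc.1 (Finset.mem_sigma.1 hq).1).2 q.2, q.1⟩ :
      Σ _ : Nat.Partition g, ℕ))
    ?_ ?_ ?_ ?_ ?_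
  · intro p hp
    have hm : p.2 ∈ p.1.parts := Multiset.mem_toFinset.1 (Finset.mem_sigma.1 hp).2
    rw [Finset.mem_sigma]
    refine ⟨Finset.mem_Icc.2 ⟨p.1.parts_pos hm, ?_⟩, Finset.mem_univ _⟩
    have h4 := Multiset.le_sum_of_mem hm
    rwa [p.1.parts_sum] at h4
  · intro q hq
    rw [Finset.mem_sigma]
    refine ⟨Finset.mem_univ _, ?_⟩
    rw [Multiset.mem_toFinset]
    exact Multiset.mem_cons_self _ _
  · intro p hp
    have hm : p.2 ∈ p.1.parts := Multiset.mem_toFinset.1 (Finset.mem_sigma.1 hp).2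
    refine Sigma.ext ?_ HEq.rfl
    exact Nat.Partition.ext (Multiset.cons_erase hm)
  · intro q hq
    refine Sigma.ext rfl (heq_of_eq ?_)
    exact Nat.Partition.ext (Multiset.erase_cons_head _ _)
  · intro p hp
    rfl

lemma mySfun_zero (c : ℕ → ℚ) : mySfun c 0 = 1 := by
  rw [mySfun, Finset.univ_unique, Finset.sum_singleton]
  have h0 : (default : Nat.Partition 0).parts = 0 := by
    rw [Multiset.eq_zero_iff_forall_notMem]
    intro a ha
    have h1 := (default : Nat.Partition 0).parts_pos ha
    have h2 := Multiset.le_sum_of_mem ha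
    have h3 := (default : Nat.Partition 0).parts_sum
    omega
  rw [h0, myTermM]
  simp [autCard]

open PowerSeries Finset in
lemma my_sum_range_two_mul (N : ℕ) (T : ℕ → ℚ) (h : ∀ i, Even i → T i = 0) :
    ∑ i ∈ Finset.range (2 * N), T i = ∑ a ∈ Finset.range N, T (2 * a + 1) := by
  induction N with
  | zero => simp
  | succ N ih =>
    have h2 : 2 * (N + 1) = (2 * N + 1) + 1 := by omega
    rw [h2, Finset.sum_range_succ, Finset.sum_range_succ, ih, h (2 * N) ⟨N, by omega⟩,
      add_zero, Finset.sum_range_succ]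

open PowerSeries Finset in
lemma my_deriv_genfun (c : ℕ → ℚ) :
    d⁄dX ℚ (PowerSeries.mk fun k => if Even k then mySfun c (k / 2) else 0)
      = (PowerSeries.mk fun m => if Even m then 0 else ((m : ℚ) + 1) * c ((m + 1) / 2))
        * (PowerSeries.mk fun k => if Even k then mySfun c (k / 2) else 0) := by
  ext m
  rw [PowerSeries.coeff_derivative, PowerSeries.coeff_mk, PowerSeries.coeff_mul]
  rcases Nat.even_or_odd m with hm | hm
  · have h1 : ¬ Even (m + 1) := by simp [Nat.even_add_one, hm]
    rw [if_neg h1, zero_mul]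
    symm; apply Finset.sum_eq_zero
    rintro ⟨i, j⟩ hij
    rw [Finset.HasAntidiagonal.mem_antidiagonal] at hij
    rcases Nat.even_or_odd i with hi | hi
    · rw [PowerSeries.coeff_mk, if_pos hi, zero_mul]
    · have hj : ¬ Even j := by
        rw [Nat.even_iff] at hm ⊢; rw [Nat.odd_iff] at hi; omega
      rw [PowerSeries.coeff_mk (f := fun k => if Even k then mySfun c (k / 2) else 0),
        if_neg hj, mul_zero]
  · obtain ⟨t, rfl⟩ := hm
    have he : Even (2 * t + 1 + 1) := ⟨t + 1, by omega⟩
    rw [if_pos he]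
    have hdiv : (2 * t + 1 + 1) / 2 = t + 1 := by omega
    rw [hdiv]
    rw [Finset.Nat.sum_antidiagonal_eq_sum_range_succ_mk]
    have h3 : (2 * t + 1).succ = 2 * (t + 1) := by omega
    rw [h3, my_sum_range_two_mul _ _ ?_]
    swap
    · intro i hi
      rw [PowerSeries.coeff_mk, if_pos hi, zero_mul]
    have hrec := mySfun_rec c (t + 1)
    have h4 : ∑ a ∈ Finset.range (t + 1),
        (PowerSeries.coeff (2 * a + 1))
          (PowerSeries.mk fun m => if Even m then 0 else ((m : ℚ) + 1) * c ((m + 1) / 2)) *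
        (PowerSeries.coeff (2 * t + 1 - (2 * a + 1)))
          (PowerSeries.mk fun k => if Even k then mySfun c (k / 2) else 0)
        = ∑ a ∈ Finset.range (t + 1), (2 * (a : ℚ) + 2) * c (a + 1) * mySfun c (t - a) := by
      refine Finset.sum_congr rfl fun a ha => ?_
      rw [Finset.mem_range] at ha
      have hodd : ¬ Even (2 * a + 1) := by rw [Nat.even_iff]; omega
      have hsub : 2 * t + 1 - (2 * a + 1) = 2 * (t - a) := by omega
      have heven : Even (2 * (t - a)) := ⟨t - a, by omega⟩
      rw [PowerSeries.coeff_mk, PowerSeries.coeff_mk, if_neg hodd, hsub, if_pos heven]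
      have hdiv2 : 2 * (t - a) / 2 = t - a := by omega
      have hdiv3 : (2 * a + 1 + 1) / 2 = a + 1 := by omega
      rw [hdiv2, hdiv3]
      push_cast
      ring
    rw [h4]
    have h5 : ∑ j ∈ Finset.Icc 1 (t + 1), (j : ℚ) * c j * mySfun c (t + 1 - j)
        = ∑ a ∈ Finset.range (t + 1),
            ((1 + a : ℕ) : ℚ) * c (1 + a) * mySfun c (t + 1 - (1 + a)) := by
      have hic : Finset.Icc 1 (t + 1) = Finset.Ico 1 (t + 2) :=
        (Finset.Ico_add_one_right_eq_Icc 1 (t + 1))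
      rw [hic, Finset.sum_Ico_eq_sum_range]
      norm_num
    have h6 : ∑ a ∈ Finset.range (t + 1), (2 * (a : ℚ) + 2) * c (a + 1) * mySfun c (t - a)
        = 2 * ∑ j ∈ Finset.Icc 1 (t + 1), (j : ℚ) * c j * mySfun c (t + 1 - j) := by
      rw [h5, Finset.mul_sum]
      refine Finset.sum_congr rfl fun a ha => ?_
      have h7 : t + 1 - (1 + a) = t - a := by omega
      have h8 : 1 + a = a + 1 := by omega
      rw [h7, h8]
      push_cast
      ring
    rw [h6, ← hrec]
    push_cast
    ring

/-- The coefficient function for `Q`. -/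
noncomputable def myCq (α : Multiset ℕ) : ℕ → ℚ := fun b => xiCoeff b * qPow (2 * b) α

/-- The coefficient function for `Q̂`. -/
noncomputable def myCh (α : Multiset ℕ) : ℕ → ℚ := fun b => xiCoeff b * qhatPow (2 * b) α

lemma myQser_eq (g : ℕ) (α : Multiset ℕ) : Qser g α = mySfun (myCq α) g := rfl

lemma myQhatser_eq (g : ℕ) (α : Multiset ℕ) : Qhatser g α = mySfun (myCh α) g := rfl

open PowerSeries Finset in
lemma my_P_relation (n : ℕ) (hn : 1 ≤ n) (α : Multiset ℕ) (hsum : α.sum = n) :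
    (PowerSeries.mk fun m => if Even m then 0 else ((m : ℚ) + 1) * myCq α ((m + 1) / 2))
      = (PowerSeries.mk fun m => if Even m then 0 else ((m : ℚ) + 1) * myCh α ((m + 1) / 2))
        + ((n - 1 : ℕ) : ℚ⟦X⟧) * d⁄dX ℚ (psLog xiSeries) := by
  have hp1 : pPow 1 α = (n : ℚ) := by
    have h : pPow 1 α = ((α.map (fun a : ℕ => (a : ℚ))).map (fun a => a ^ 1)).sum := by
      rw [pPow]; congr 1
      induction α using Multiset.induction with
      | empty => rfl
      | cons a s ih => simp
    have h1 : ∀ s : Multiset ℕ,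
        ((s.map (fun a : ℕ => (a : ℚ))).map (fun a => a ^ 1)).sum = ((s.sum : ℕ) : ℚ) := by
      intro s
      induction s using Multiset.induction with
      | empty => simp
      | cons a s ih =>
        rw [Multiset.map_cons, Multiset.map_cons, Multiset.sum_cons, ih, Multiset.sum_cons]
        push_cast; ring
    rw [h, h1, hsum]
  have hcast : ((n - 1 : ℕ) : ℚ⟦X⟧) = PowerSeries.C ((n - 1 : ℕ) : ℚ) :=
    (map_natCast (PowerSeries.C) (n - 1)).symm
  ext m
  rw [map_add, hcast, PowerSeries.coeff_C_mul, PowerSeries.coeff_mk, PowerSeries.coeff_mk,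
    PowerSeries.coeff_derivative]
  rcases Nat.even_or_odd m with hm | hm
  · rw [if_pos hm, if_pos hm,
      my_psLog_xi_even (m + 1) (by rcases hm with ⟨t, ht⟩; exact ⟨t, by omega⟩),
      zero_mul, mul_zero, add_zero]
  · obtain ⟨t, rfl⟩ := hm
    have hne : ¬ Even (2 * t + 1) := by rw [Nat.even_iff]; omega
    rw [if_neg hne, if_neg hne]
    have hxc : PowerSeries.coeff (2 * t + 1 + 1) (psLog xiSeries) = xiCoeff (t + 1) := by
      have h2 : 2 * (t + 1) = 2 * t + 1 + 1 := by omega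
      rw [xiCoeff, h2]
    rw [hxc]
    have hdiv : (2 * t + 1 + 1) / 2 = t + 1 := by omega
    rw [hdiv]
    have hcsub : ((n - 1 : ℕ) : ℚ) = (n : ℚ) - 1 := Nat.cast_sub hn
    rw [hcsub, myCq, myCh]
    simp only [qPow, qhatPow, hp1]
    push_cast
    ring

/-- `Σ_{g≥0} Q_g(α) x^{2g} = ξ(x)^{n-1} Σ_{g≥0} Q̂_g(α) x^{2g}` in
`ℚ[[x]]`, for `α` a partition of `n`. -/
theorem Qser_eq_xi_pow_mul_Qhatser (n : ℕ) (hn : 1 ≤ n)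
    (α : Multiset ℕ) (hpos : ∀ a ∈ α, 0 < a) (hsum : α.sum = n) :
    (PowerSeries.mk fun k => if Even k then Qser (k / 2) α else 0) =
      xiSeries ^ (n - 1) *
        PowerSeries.mk fun k => if Even k then Qhatser (k / 2) α else 0 := by
  classical
  simp only [myQser_eq, myQhatser_eq]
  set A : PowerSeries ℚ :=
    PowerSeries.mk fun k => if Even k then mySfun (myCq α) (k / 2) else 0 with hAdef
  set B : PowerSeries ℚ :=
    PowerSeries.mk fun k => if Even k then mySfun (myCh α) (k / 2) else 0 with hBdef
  set PA : PowerSeries ℚ :=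
    PowerSeries.mk fun m => if Even m then 0 else ((m : ℚ) + 1) * myCq α ((m + 1) / 2) with hPAdef
  have hA : PowerSeries.derivative ℚ A = PA * A := my_deriv_genfun (myCq α)
  have hB : PowerSeries.derivative ℚ B =
      (PowerSeries.mk fun m => if Even m then 0 else ((m : ℚ) + 1) * myCh α ((m + 1) / 2)) * B :=
    my_deriv_genfun (myCh α)
  have hPP := my_P_relation n hn α hsum
  have hC : PowerSeries.derivative ℚ (xiSeries ^ (n - 1) * B) = PA * (xiSeries ^ (n - 1) * B) := by
    rw [Derivation.leibniz, smul_eq_mul, smul_eq_mul,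
      my_derivative_pow_psLog xiSeries my_constantCoeff_xi (n - 1), hB, hPAdef, hPP]
    ring
  have h0 : PowerSeries.coeff 0 A = PowerSeries.coeff 0 (xiSeries ^ (n - 1) * B) := by
    rw [PowerSeries.coeff_zero_eq_constantCoeff, map_mul, map_pow, my_constantCoeff_xi,
      one_pow, one_mul, hAdef, hBdef, ← PowerSeries.coeff_zero_eq_constantCoeff,
      PowerSeries.coeff_mk, PowerSeries.coeff_mk]
    norm_num [mySfun_zero]
  exact my_ode_unique h0 hA hC
end

section
/- For all integers n ≥ 1 and h ≥ 0, the coefficient of x^{2h} in the formal power series ξ(x)^{n−1} over ℚ equals (1/(n−1+2h)!) Σ_{j=0}^{n−1} C(n−1, j) (−1)^j ((n−1)/2 − j)^{n−1+2h}, where C(·,·) denotes a binomial coefficient. -/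
open scoped Classical

open PowerSeries

lemma rescale_exp_pow (a : ℚ) (k : ℕ) :
    (rescale a (exp ℚ)) ^ k = rescale ((k : ℚ) * a) (exp ℚ) := by
  induction k with
  | zero => simp [rescale_zero]
  | succ k ih =>
      rw [pow_succ, ih, exp_mul_exp_eq_exp_add]
      push_cast; ring_nf

lemma xi_mul_X : xiSeries * X = rescale (1/2 : ℚ) (exp ℚ) - rescale (-(1/2) : ℚ) (exp ℚ) := by
  ext k
  rcases k with _ | k
  · rw [coeff_zero_mul_X, map_sub, coeff_rescale, coeff_rescale, coeff_exp]
    norm_num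
  · rw [coeff_succ_mul_X]
    simp only [map_sub, coeff_rescale, coeff_exp, Algebra.algebraMap_self, RingHom.id_apply,
      xiSeries, coeff_mk]
    rcases Nat.even_or_odd k with ⟨m, rfl⟩ | ⟨m, rfl⟩
    · have hev : Even (m + m) := ⟨m, rfl⟩
      simp only [hev, if_true]
      have h2 : (m + m) / 2 = m := by omega
      rw [h2]
      have hodd : Odd (m + m + 1) := ⟨m, by ring⟩
      rw [hodd.neg_pow]
      have hfac : ((m + m + 1).factorial : ℚ) ≠ 0 := by positivity
      have : ((1:ℚ)/2) ^ (m + m + 1) = (1/4)^m * (1/2) := by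
        rw [show m + m + 1 = 2*m + 1 by ring, pow_succ, pow_mul]; norm_num
      rw [this]
      field_simp
      rw [← mul_pow]; norm_num
    · simp only [Nat.even_add_one, Nat.not_even_iff_odd]
      rw [if_neg (by simp [Nat.even_add_one, parity_simps])]
      have heven : Even (2*m + 1 + 1) := ⟨m + 1, by ring⟩
      rw [heven.neg_pow]
      ring

/-- the coefficient of `x^{2h}` in `ξ(x)^{n-1}` equals
`(1/(n-1+2h)!) Σ_{j=0}^{n-1} C(n-1,j) (-1)^j ((n-1)/2 - j)^{n-1+2h}`. -/
theorem coeff_xi_pow (n h : ℕ) (hn : 1 ≤ n) :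
    PowerSeries.coeff (2 * h) (xiSeries ^ (n - 1)) =
      (1 / ((n - 1 + 2 * h).factorial : ℚ)) *
        ∑ j ∈ Finset.range n, ((n - 1).choose j : ℚ) * (-1) ^ j
          * (((n : ℚ) - 1) / 2 - (j : ℚ)) ^ (n - 1 + 2 * h) := by
  set N := n - 1 + 2 * h with hN
  have h1 : PowerSeries.coeff (2*h) (xiSeries ^ (n-1))
      = PowerSeries.coeff N ((xiSeries * X) ^ (n-1)) := by
    rw [mul_pow, hN, show n - 1 + 2*h = 2*h + (n-1) by omega, coeff_mul_X_pow]
  rw [h1, xi_mul_X, sub_pow, show n - 1 + 1 = n by omega, map_sum, Finset.mul_sum]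
  apply Finset.sum_congr rfl
  intro j hj
  have hj' : j ≤ n - 1 := by
    have := Finset.mem_range.mp hj; omega
  rw [rescale_exp_pow, rescale_exp_pow, mul_assoc ((-1 : ℚ⟦X⟧) ^ (j + (n-1))),
    exp_mul_exp_eq_exp_add]
  have hc : (j : ℚ) * (1/2) + ((n - 1 - j : ℕ) : ℚ) * (-(1/2))
      = -((((n : ℚ) - 1) / 2 - (j : ℚ))) := by
    rw [Nat.cast_sub hj', Nat.cast_sub hn]
    push_cast; ring
  rw [hc]
  have hterm : ((-1 : ℚ⟦X⟧) ^ (j + (n-1)) * rescale (-((((n : ℚ) - 1) / 2 - (j : ℚ)))) (exp ℚ)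
      * ((n-1).choose j : ℚ⟦X⟧))
      = PowerSeries.C ((-1 : ℚ) ^ (j + (n-1)) * ((n-1).choose j : ℚ))
        * rescale (-((((n : ℚ) - 1) / 2 - (j : ℚ)))) (exp ℚ) := by
    push_cast
    rw [show ((-1 : ℚ⟦X⟧)) = PowerSeries.C (-1) by simp, ← map_pow]
    rw [show (((n-1).choose j : ℚ⟦X⟧)) = PowerSeries.C ((n-1).choose j : ℚ) by
      simp, map_mul]
    ring
  rw [hterm, coeff_C_mul, coeff_rescale, coeff_exp, Algebra.algebraMap_self, RingHom.id_apply]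
  have hsign : (-((((n : ℚ) - 1) / 2 - (j : ℚ)))) ^ N
      = (-1 : ℚ) ^ N * ((((n : ℚ) - 1) / 2 - (j : ℚ))) ^ N := by
    rw [neg_pow]
  rw [hsign]
  have hs2 : (-1 : ℚ) ^ (j + (n-1)) * (-1 : ℚ) ^ N = (-1) ^ j := by
    rw [← pow_add, show j + (n-1) + N = j + 2*((n-1) + h) by omega, pow_add, pow_mul]
    norm_num
  rw [← hs2]
  ring
end
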